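/- arXiv:1703.04781 — 4 statements merged into one kernel-verified Lean document; each statement's English description precedes it below -/
import Mathlib

section
/- Fix α ∈ (0,1), η ≥ 0, a tempering function q, and z ≥ 0. Then lim_{a↓0} a^{-α} η ∫_{(0,∞)}(1 - e^{-(1-e^{-za})x}) q(ax) x^{-1-α} dx = η ∫_{(0,∞)}(1 - e^{-zx}) q(x) x^{-1-α} dx. -/
open MeasureTheory Real Set Filter

-- integrability of min 1 y * y^(-1-α) on Ioi 0
lemma aux_int_min {α : ℝ} (hα0 : 0 < α) (hα1 : α < 1) :
    IntegrableOn (fun y : ℝ => min 1 y * y ^ (-1 - α : ℝ)) (Set.Ioi 0) := by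
  have h1 : IntegrableOn (fun y : ℝ => min 1 y * y ^ (-1 - α : ℝ)) (Set.Ioc 0 1) := by
    have hint : IntegrableOn (fun y : ℝ => y ^ (-α : ℝ)) (Set.Ioc (0:ℝ) 1) := by
      have := intervalIntegral.intervalIntegrable_rpow' (a := (0:ℝ)) (b := 1)
        (r := -α) (by linarith)
      rwa [intervalIntegrable_iff_integrableOn_Ioc_of_le (by norm_num)] at this
    refine hint.congr_fun (fun y hy => ?_) measurableSet_Ioc
    have hy0 : (0:ℝ) < y := hy.1
    have hmin : min 1 y = y := min_eq_right hy.2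
    rw [hmin, show y * y ^ (-1 - α : ℝ) = y ^ (1 + (-1 - α) : ℝ) by
      rw [Real.rpow_add hy0, Real.rpow_one], show (1 + (-1 - α) : ℝ) = -α by ring]
  have h2 : IntegrableOn (fun y : ℝ => min 1 y * y ^ (-1 - α : ℝ)) (Set.Ioi 1) := by
    have hint : IntegrableOn (fun y : ℝ => y ^ (-1 - α : ℝ)) (Set.Ioi (1:ℝ)) :=
      integrableOn_Ioi_rpow_of_lt (by linarith) one_pos
    refine hint.congr_fun (fun y hy => ?_) measurableSet_Ioi
    rw [min_eq_left (le_of_lt hy), one_mul]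
  have : Set.Ioi (0:ℝ) = Set.Ioc 0 1 ∪ Set.Ioi 1 := (Set.Ioc_union_Ioi_eq_Ioi (by norm_num)).symm
  rw [this]
  exact h1.union h2

-- limit of (1 - exp(-(z*a)))/a as a → 0+
lemma aux_slope {z : ℝ} :
    Tendsto (fun a : ℝ => (1 - Real.exp (-(z * a))) / a) (nhdsWithin 0 (Set.Ioi 0)) (nhds z) := by
  have hd : HasDerivAt (fun a : ℝ => 1 - Real.exp (-(z * a))) z 0 := by
    have h1 : HasDerivAt (fun a : ℝ => z * a) z 0 := by
      simpa using (hasDerivAt_id (0:ℝ)).const_mul z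
    have h2 : HasDerivAt (fun a : ℝ => Real.exp (-(z * a))) (-z) 0 := by
      have := (h1.neg).exp
      simpa using this
    simpa using (h2.const_sub 1)
  have := hasDerivAt_iff_tendsto_slope.mp hd
  have hmono : nhdsWithin (0:ℝ) (Set.Ioi 0) ≤ nhdsWithin 0 {(0:ℝ)}ᶜ :=
    nhdsWithin_mono 0 (fun x hx => ne_of_gt hx)
  have := this.mono_left hmono
  refine this.congr' ?_
  filter_upwards [self_mem_nhdsWithin] with a (ha : (0:ℝ) < a)
  simp [slope, div_eq_inv_mul, mul_comm]

theorem stmt5 (α η z : ℝ) (hα : α ∈ Set.Ioo (0:ℝ) 1) (hη : 0 ≤ η) (hz : 0 ≤ z)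
    (q : ℝ → ℝ) (hqmeas : Measurable q) (hqnonneg : ∀ x, 0 ≤ q x)
    (C : ℝ) (hqbdd : ∀ x, q x ≤ C)
    (hq1 : Filter.Tendsto q (nhdsWithin 0 (Set.Ioi 0)) (nhds 1))
    (hqint : IntegrableOn (fun x => min 1 x * q x * x ^ (-1 - α : ℝ)) (Set.Ioi 0)) :
    Filter.Tendsto
      (fun a : ℝ => a ^ (-α : ℝ) * η * ∫ x in Set.Ioi (0:ℝ),
        (1 - Real.exp (-((1 - Real.exp (-(z * a))) * x))) * q (a * x) * x ^ (-1 - α : ℝ))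
      (nhdsWithin 0 (Set.Ioi 0))
      (nhds (η * ∫ x in Set.Ioi (0:ℝ),
        (1 - Real.exp (-(z * x))) * q x * x ^ (-1 - α : ℝ))) := by
  obtain ⟨hα0, hα1⟩ := hα
  set c : ℝ → ℝ := fun a => (1 - Real.exp (-(z * a))) / a with hc
  -- basic facts about c for a > 0
  have hcnn : ∀ a : ℝ, 0 < a → 0 ≤ c a := by
    intro a ha
    apply div_nonneg _ ha.le
    have : Real.exp (-(z * a)) ≤ 1 := Real.exp_le_one_iff.mpr (by nlinarith)
    linarith
  have hcle : ∀ a : ℝ, 0 < a → c a ≤ z := by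
    intro a ha
    rw [div_le_iff₀ ha]
    have := Real.add_one_le_exp (-(z * a))
    nlinarith [Real.exp_pos (-(z * a))]
  -- the substituted integral
  set J : ℝ → ℝ := fun a => ∫ y in Set.Ioi (0:ℝ),
    (1 - Real.exp (-(c a * y))) * q y * y ^ (-1 - α : ℝ) with hJ
  -- change of variables
  have key : ∀ a : ℝ, 0 < a →
      a ^ (-α : ℝ) * ∫ x in Set.Ioi (0:ℝ),
        (1 - Real.exp (-((1 - Real.exp (-(z * a))) * x))) * q (a * x) * x ^ (-1 - α : ℝ)
      = J a := by
    intro a ha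
    have hcv := integral_comp_mul_left_Ioi
      (fun y : ℝ => (1 - Real.exp (-(c a * y))) * q y * y ^ (-1 - α : ℝ)) 0 ha
    rw [mul_zero] at hcv
    have heq : ∫ x in Set.Ioi (0:ℝ),
        (1 - Real.exp (-(c a * (a * x)))) * q (a * x) * (a * x) ^ (-1 - α : ℝ)
        = ∫ x in Set.Ioi (0:ℝ), a ^ (-1 - α : ℝ) *
          ((1 - Real.exp (-((1 - Real.exp (-(z * a))) * x))) * q (a * x) * x ^ (-1 - α : ℝ)) := by
      apply setIntegral_congr_fun measurableSet_Ioi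
      intro x hx
      have hx0 : (0:ℝ) < x := hx
      have h1 : c a * (a * x) = (1 - Real.exp (-(z * a))) * x := by
        simp only [hc]; field_simp
      have h2 : (a * x) ^ (-1 - α : ℝ) = a ^ (-1 - α : ℝ) * x ^ (-1 - α : ℝ) :=
        Real.mul_rpow ha.le hx0.le
      dsimp only
      rw [h1, h2]; ring
    simp only [smul_eq_mul] at hcv
    rw [heq, integral_const_mul] at hcv
    have hpow : a ^ (-α : ℝ) = a * a ^ (-1 - α : ℝ) := by
      nth_rewrite 2 [← Real.rpow_one a]
      rw [← Real.rpow_add ha]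
      congr 1; ring
    simp only [hJ]
    rw [hpow, mul_assoc, hcv, ← mul_assoc, mul_inv_cancel₀ ha.ne', one_mul]
  -- dominated convergence for J
  have hKnn : (0:ℝ) ≤ max C 0 * max 1 z := by positivity
  have hJlim : Tendsto J (nhdsWithin 0 (Set.Ioi 0))
      (nhds (∫ x in Set.Ioi (0:ℝ), (1 - Real.exp (-(z * x))) * q x * x ^ (-1 - α : ℝ))) := by
    apply tendsto_integral_filter_of_dominated_convergence
      (fun y => max C 0 * max 1 z * (min 1 y * y ^ (-1 - α : ℝ)))
    · filter_upwards with a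
      apply Measurable.aestronglyMeasurable
      fun_prop
    · filter_upwards [self_mem_nhdsWithin] with a (ha : (0:ℝ) < a)
      filter_upwards [ae_restrict_mem measurableSet_Ioi] with y (hy : (0:ℝ) < y)
      have hy0 := hy.le
      have hrp : (0:ℝ) ≤ y ^ (-1 - α : ℝ) := Real.rpow_nonneg hy0 _
      have h0 : 0 ≤ 1 - Real.exp (-(c a * y)) := by
        have : Real.exp (-(c a * y)) ≤ 1 :=
          Real.exp_le_one_iff.mpr (by nlinarith [hcnn a ha])
        linarith
      have hnn : 0 ≤ (1 - Real.exp (-(c a * y))) * q y * y ^ (-1 - α : ℝ) :=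
        mul_nonneg (mul_nonneg h0 (hqnonneg y)) hrp
      rw [Real.norm_eq_abs, abs_of_nonneg hnn]
      have hb1 : 1 - Real.exp (-(c a * y)) ≤ max 1 z * min 1 y := by
        have hle1 : 1 - Real.exp (-(c a * y)) ≤ 1 := by
          have := (Real.exp_pos (-(c a * y))).le; linarith
        have hleu : 1 - Real.exp (-(c a * y)) ≤ c a * y := by
          have := Real.add_one_le_exp (-(c a * y)); linarith
        rcases le_total 1 y with h | h
        · rw [min_eq_left h]
          calc 1 - Real.exp (-(c a * y)) ≤ 1 := hle1
            _ ≤ max 1 z * 1 := by simp [le_max_left]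
        · rw [min_eq_right h]
          calc 1 - Real.exp (-(c a * y)) ≤ c a * y := hleu
            _ ≤ z * y := by nlinarith [hcle a ha, hcnn a ha]
            _ ≤ max 1 z * y := by nlinarith [le_max_right (1:ℝ) z]
      have hb2 : q y ≤ max C 0 := le_max_of_le_left (hqbdd y)
      calc (1 - Real.exp (-(c a * y))) * q y * y ^ (-1 - α : ℝ)
          ≤ (max 1 z * min 1 y) * (max C 0) * y ^ (-1 - α : ℝ) := by
            apply mul_le_mul_of_nonneg_right _ hrp
            apply mul_le_mul hb1 hb2 (hqnonneg y)
            positivity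
        _ = max C 0 * max 1 z * (min 1 y * y ^ (-1 - α : ℝ)) := by ring
    · exact (aux_int_min hα0 hα1).const_mul _
    · filter_upwards [ae_restrict_mem measurableSet_Ioi] with y (hy : (0:ℝ) < y)
      have hca : Tendsto c (nhdsWithin 0 (Set.Ioi 0)) (nhds z) := aux_slope
      have hcont : Continuous fun u : ℝ => (1 - Real.exp (-(u * y))) * q y * y ^ (-1 - α : ℝ) := by
        fun_prop
      exact (hcont.tendsto z).comp hca
  -- conclude
  have := hJlim.const_mul η
  refine this.congr' ?_
  filter_upwards [self_mem_nhdsWithin] with a (ha : (0:ℝ) < a)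
  show η * J a = _
  rw [← key a ha]; ring
end

section
/- Let X_a ~ DTS_α(q_{1/a}, a^{-α} η) where q_{1/a}(x) = q(ax). Then as a ↓ 0, the random variables a·X_a converge in distribution to PTS_α(q, η). -/
open MeasureTheory Real Set Filter Topology

private lemma one_sub_exp_le (t : ℝ) : 1 - Real.exp (-t) ≤ t := by
  nlinarith [Real.add_one_le_exp (-t)]

private lemma one_sub_exp_nonneg {t : ℝ} (ht : 0 ≤ t) : 0 ≤ 1 - Real.exp (-t) := by
  have : Real.exp (-t) ≤ 1 := Real.exp_le_one_iff.mpr (by linarith)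
  linarith

private lemma one_sub_exp_bound {u z y : ℝ} (hy : 0 < y) (hu0 : 0 ≤ u) (huz : u ≤ z) :
    1 - Real.exp (-(u * y)) ≤ max 1 z * min 1 y := by
  rcases le_or_gt y 1 with h | h
  · have h1 : 1 - Real.exp (-(u * y)) ≤ u * y := one_sub_exp_le _
    have : u * y ≤ z * y := by nlinarith
    have hz : z * y ≤ max 1 z * y := by nlinarith [le_max_right (1:ℝ) z]
    rw [min_eq_right h]
    linarith
  · have h1 : 1 - Real.exp (-(u * y)) ≤ 1 := by
      have := Real.exp_pos (-(u * y)); linarith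
    rw [min_eq_left h.le]
    have := le_max_left (1:ℝ) z
    linarith

private lemma levy_tendsto {ι : Type*} {l : Filter ι} [l.IsCountablyGenerated]
    (α : ℝ) (q : ℝ → ℝ) (hqmeas : Measurable q) (hqnonneg : ∀ x, 0 ≤ q x)
    (hqint : IntegrableOn (fun x => min 1 x * q x * x ^ (-1 - α : ℝ)) (Set.Ioi 0))
    (z z₀ : ℝ) (c : ι → ℝ) (hc : Tendsto c l (nhds z₀)) (hcb : ∀ᶠ a in l, c a ∈ Set.Icc 0 z) :
    Tendsto (fun a => ∫ y in Set.Ioi (0:ℝ),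
        (1 - Real.exp (-(c a * y))) * q y * y ^ (-1 - α : ℝ)) l
      (nhds (∫ y in Set.Ioi (0:ℝ), (1 - Real.exp (-(z₀ * y))) * q y * y ^ (-1 - α : ℝ))) := by
  apply tendsto_integral_filter_of_dominated_convergence
    (fun y => max 1 z * (min 1 y * q y * y ^ (-1 - α : ℝ)))
  · apply Eventually.of_forall
    intro a
    apply Measurable.aestronglyMeasurable
    fun_prop
  · filter_upwards [hcb] with a hca
    rw [ae_restrict_iff' measurableSet_Ioi]
    apply ae_of_all
    intro y hy
    have hy' : (0:ℝ) < y := hy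
    have hq := hqnonneg y
    have hrp : (0:ℝ) ≤ y ^ (-1 - α : ℝ) := Real.rpow_nonneg hy'.le _
    have h1 : 0 ≤ 1 - Real.exp (-(c a * y)) := one_sub_exp_nonneg (by nlinarith [hca.1])
    have h2 : 1 - Real.exp (-(c a * y)) ≤ max 1 z * min 1 y :=
      one_sub_exp_bound hy' hca.1 hca.2
    have hnn : 0 ≤ (1 - Real.exp (-(c a * y))) * q y * y ^ (-1 - α : ℝ) := by positivity
    rw [Real.norm_of_nonneg hnn]
    calc (1 - Real.exp (-(c a * y))) * q y * y ^ (-1 - α : ℝ)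
        ≤ (max 1 z * min 1 y) * q y * y ^ (-1 - α : ℝ) := by
          apply mul_le_mul_of_nonneg_right _ hrp
          exact mul_le_mul_of_nonneg_right h2 hq
      _ = max 1 z * (min 1 y * q y * y ^ (-1 - α : ℝ)) := by ring
  · exact hqint.const_mul _
  · apply ae_of_all
    intro y
    have : Tendsto (fun a => 1 - Real.exp (-(c a * y))) l (nhds (1 - Real.exp (-(z₀ * y)))) := by
      exact (Real.continuous_exp.tendsto _).comp ((hc.mul_const y).neg) |>.const_sub 1
    exact (this.mul_const _).mul_const _

private lemma integral_eq_tsum (ν : Measure ℕ) [IsProbabilityMeasure ν]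
    (g : ℕ → ℝ) (B : ℝ) (hg : ∀ n, |g n| ≤ B) :
    ∫ n, g n ∂ν = ∑' n, (ν {n}).toReal * g n := by
  have hint : Integrable g ν := by
    apply Integrable.mono' (integrable_const B) (measurable_from_top.aestronglyMeasurable)
    exact ae_of_all _ fun n => by simpa using hg n
  rw [integral_countable' hint]
  simp [smul_eq_mul]
  rfl

private lemma tsum_w_eq_one (ν : Measure ℕ) [IsProbabilityMeasure ν] :
    ∑' n : ℕ, (ν {n}).toReal = 1 := by
  have h : ∑' n : ℕ, ν {n} = 1 := by
    rw [← measure_iUnion (fun i j h => by simp [Set.disjoint_singleton, h])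
      (fun n => measurableSet_singleton n), Set.iUnion_of_singleton]
    exact measure_univ
  rw [← ENNReal.tsum_toReal_eq (fun n => measure_ne_top _ _)] at *
  rw [h]; rfl

private lemma summable_w (ν : Measure ℕ) [IsProbabilityMeasure ν] :
    Summable fun n : ℕ => (ν {n}).toReal := by
  apply ENNReal.summable_toReal
  have h : ∑' n : ℕ, ν {n} = 1 := by
    rw [← measure_iUnion (fun i j h => by simp [Set.disjoint_singleton, h])
      (fun n => measurableSet_singleton n), Set.iUnion_of_singleton]
    exact measure_univ
  rw [h]; exact ENNReal.one_ne_top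

private lemma summable_w_mul (ν : Measure ℕ) [IsProbabilityMeasure ν]
    (g : ℕ → ℝ) (B : ℝ) (hg : ∀ n, |g n| ≤ B) :
    Summable fun n : ℕ => (ν {n}).toReal * g n := by
  apply Summable.of_norm_bounded ((summable_w ν).mul_right B)
  intro n
  rw [norm_mul, Real.norm_of_nonneg ENNReal.toReal_nonneg]
  exact mul_le_mul_of_nonneg_left (by simpa using hg n) ENNReal.toReal_nonneg

private lemma abs_tsum_w_sub_le (ν : Measure ℕ) [IsProbabilityMeasure ν]
    (g1 g2 b : ℕ → ℝ) (B1 B2 : ℝ) (hg1 : ∀ n, |g1 n| ≤ B1) (hg2 : ∀ n, |g2 n| ≤ B2)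
    (hb : ∀ n, |g1 n - g2 n| ≤ b n)
    (hbs : Summable fun n : ℕ => (ν {n}).toReal * b n) :
    |(∑' n : ℕ, (ν {n}).toReal * g1 n) - ∑' n : ℕ, (ν {n}).toReal * g2 n|
      ≤ ∑' n : ℕ, (ν {n}).toReal * b n := by
  have s1 := summable_w_mul ν g1 B1 hg1
  have s2 := summable_w_mul ν g2 B2 hg2
  rw [← Summable.tsum_sub s1 s2]
  have heq : ∀ n : ℕ, (ν {n}).toReal * g1 n - (ν {n}).toReal * g2 n
      = (ν {n}).toReal * (g1 n - g2 n) := fun n => by ring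
  rw [tsum_congr heq]
  have hnorm : Summable fun n : ℕ => ‖(ν {n}).toReal * (g1 n - g2 n)‖ := by
    apply Summable.of_nonneg_of_le (fun n => norm_nonneg _) _ hbs
    intro n
    rw [norm_mul, Real.norm_of_nonneg ENNReal.toReal_nonneg, Real.norm_eq_abs]
    exact mul_le_mul_of_nonneg_left (hb n) ENNReal.toReal_nonneg
  calc |∑' n : ℕ, (ν {n}).toReal * (g1 n - g2 n)|
      ≤ ∑' n : ℕ, ‖(ν {n}).toReal * (g1 n - g2 n)‖ := by
        rw [← Real.norm_eq_abs]; exact norm_tsum_le_tsum_norm hnorm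
    _ ≤ ∑' n : ℕ, (ν {n}).toReal * b n := by
        apply Summable.tsum_le_tsum _ hnorm hbs
        intro n
        rw [norm_mul, Real.norm_of_nonneg ENNReal.toReal_nonneg, Real.norm_eq_abs]
        exact mul_le_mul_of_nonneg_left (hb n) ENNReal.toReal_nonneg
private lemma La_tendsto (α η : ℝ) (hη : 0 ≤ η)
    (q : ℝ → ℝ) (hqmeas : Measurable q) (hqnonneg : ∀ x, 0 ≤ q x)
    (hqint : IntegrableOn (fun x => min 1 x * q x * x ^ (-1 - α : ℝ)) (Set.Ioi 0))
    (ν : ℝ → Measure ℕ) (hνprob : ∀ a : ℝ, 0 < a → IsProbabilityMeasure (ν a))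
    (hpgf : ∀ a : ℝ, 0 < a → ∀ s ∈ Set.Ioc (0:ℝ) 1,
      (∑' n : ℕ, s ^ n * ((ν a) {n}).toReal) =
        Real.exp (-(a ^ (-α : ℝ) * η * ∫ x in Set.Ioi (0:ℝ),
          (1 - Real.exp (-((1 - s) * x))) * q (a * x) * x ^ (-1 - α : ℝ))))
    (μ : Measure ℝ) [IsProbabilityMeasure μ]
    (hLT : ∀ z : ℝ, 0 ≤ z →
      ∫ x, Real.exp (-(z * x)) ∂μ =
        Real.exp (-(η * ∫ x in Set.Ioi (0:ℝ),
          (1 - Real.exp (-(z * x))) * q x * x ^ (-1 - α : ℝ))))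
    (z : ℝ) (hz : 0 ≤ z) :
    Tendsto (fun a : ℝ => ∑' n : ℕ, ((ν a) {n}).toReal * Real.exp (-(z * (a * n))))
      (nhdsWithin 0 (Set.Ioi 0)) (nhds (∫ x, Real.exp (-(z * x)) ∂μ)) := by
  set c : ℝ → ℝ := fun a => (1 - Real.exp (-(z * a))) / a with hcdef
  -- c tends to z
  have hc : Tendsto c (nhdsWithin 0 (Set.Ioi 0)) (nhds z) := by
    have hderiv : HasDerivAt (fun t : ℝ => Real.exp (-(z * t))) (-z) 0 := by
      have h1 : HasDerivAt (fun t : ℝ => -(z * t)) (-z) 0 := by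
        have := (hasDerivAt_id (0:ℝ)).const_mul (-z)
        simp only [id, mul_one, neg_mul] at this
        exact this
      simpa using h1.exp
    have hslope := hasDerivAt_iff_tendsto_slope.mp hderiv
    have hmono : nhdsWithin (0:ℝ) (Set.Ioi 0) ≤ nhdsWithin 0 {(0:ℝ)}ᶜ :=
      nhdsWithin_mono 0 (fun x (hx : x ∈ Set.Ioi (0:ℝ)) => ne_of_gt hx)
    have : Tendsto (fun a => -(slope (fun t : ℝ => Real.exp (-(z * t))) 0 a))
        (nhdsWithin 0 (Set.Ioi 0)) (nhds z) := by
      simpa using (hslope.neg.mono_left hmono)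
    apply this.congr'
    filter_upwards [self_mem_nhdsWithin] with a (ha : a ∈ Set.Ioi (0:ℝ))
    rw [slope_def_field]
    simp only [hcdef, mul_zero, neg_zero, Real.exp_zero, sub_zero]
    ring
  have hcb : ∀ᶠ a in nhdsWithin (0:ℝ) (Set.Ioi 0), c a ∈ Set.Icc 0 z := by
    filter_upwards [self_mem_nhdsWithin] with a (ha : a ∈ Set.Ioi (0:ℝ))
    have ha' : (0:ℝ) < a := ha
    constructor
    · exact div_nonneg (one_sub_exp_nonneg (by positivity)) ha'.le
    · rw [div_le_iff₀ ha']
      have := one_sub_exp_le (z * a)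
      linarith
  have hmain := levy_tendsto α q hqmeas hqnonneg hqint z z c hc hcb
  have hcont : Continuous fun t : ℝ => Real.exp (-(η * t)) := by continuity
  have hfinal := (hcont.tendsto _).comp hmain
  rw [hLT z hz]
  apply hfinal.congr'
  filter_upwards [self_mem_nhdsWithin] with a (ha : a ∈ Set.Ioi (0:ℝ))
  have ha' : (0:ℝ) < a := ha
  -- now prove the key identity
  have hs : Real.exp (-(z * a)) ∈ Set.Ioc (0:ℝ) 1 :=
    ⟨Real.exp_pos _, Real.exp_le_one_iff.mpr (neg_nonpos.mpr (by positivity))⟩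
  have hstep1 : (∑' n : ℕ, Real.exp (-(z * a)) ^ n * ((ν a) {n}).toReal)
      = ∑' n : ℕ, ((ν a) {n}).toReal * Real.exp (-(z * (a * n))) := by
    apply tsum_congr
    intro n
    rw [mul_comm]
    congr 1
    rw [← Real.exp_nat_mul]
    congr 1
    ring
  -- change of variables
  have hkey : a ^ (-α : ℝ) * η * (∫ x in Set.Ioi (0:ℝ),
      (1 - Real.exp (-((1 - Real.exp (-(z * a))) * x))) * q (a * x) * x ^ (-1 - α : ℝ))
      = η * ∫ y in Set.Ioi (0:ℝ), (1 - Real.exp (-(c a * y))) * q y * y ^ (-1 - α : ℝ) := by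
    set G : ℝ → ℝ := fun y => (1 - Real.exp (-(c a * y))) * q y * y ^ (-1 - α : ℝ) with hGdef
    have h1 : (∫ x in Set.Ioi (0:ℝ),
        (1 - Real.exp (-((1 - Real.exp (-(z * a))) * x))) * q (a * x) * x ^ (-1 - α : ℝ))
        = ∫ x in Set.Ioi (0:ℝ), a ^ ((1:ℝ) + α) * G (a * x) := by
      apply setIntegral_congr_fun measurableSet_Ioi
      intro x hx
      have hx' : (0:ℝ) < x := hx
      have e1 : c a * (a * x) = (1 - Real.exp (-(z * a))) * x := by
        rw [hcdef]
        field_simp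
      have e2 : (a * x) ^ (-1 - α : ℝ) = a ^ (-1 - α : ℝ) * x ^ (-1 - α : ℝ) :=
        Real.mul_rpow ha'.le hx'.le
      have e3 : a ^ ((1:ℝ) + α) * a ^ (-1 - α : ℝ) = 1 := by
        rw [← Real.rpow_add ha']
        norm_num
      rw [hGdef]
      simp only [e1, e2]
      calc (1 - Real.exp (-((1 - Real.exp (-(z * a))) * x))) * q (a * x) * x ^ (-1 - α : ℝ)
          = (a ^ ((1:ℝ) + α) * a ^ (-1 - α : ℝ)) *
            ((1 - Real.exp (-((1 - Real.exp (-(z * a))) * x))) * q (a * x) * x ^ (-1 - α : ℝ)) := by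
            rw [e3]; ring
        _ = a ^ ((1:ℝ) + α) *
            ((1 - Real.exp (-((1 - Real.exp (-(z * a))) * x))) * q (a * x) *
              (a ^ (-1 - α : ℝ) * x ^ (-1 - α : ℝ))) := by ring
    have h2 : (∫ x in Set.Ioi (0:ℝ), a ^ ((1:ℝ) + α) * G (a * x))
        = a ^ ((1:ℝ) + α) * (a⁻¹ * ∫ y in Set.Ioi (0:ℝ), G y) := by
      rw [integral_const_mul]
      congr 1
      have := integral_comp_mul_left_Ioi G 0 ha'
      rw [mul_zero] at this
      rw [this, smul_eq_mul]
    rw [h1, h2]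
    have e4 : a ^ (-α : ℝ) * (a ^ ((1:ℝ) + α) * a⁻¹) = 1 := by
      rw [← Real.rpow_neg_one a, ← Real.rpow_add ha', ← Real.rpow_add ha']
      norm_num
    calc a ^ (-α : ℝ) * η * (a ^ ((1:ℝ) + α) * (a⁻¹ * ∫ y in Set.Ioi (0:ℝ), G y))
        = (a ^ (-α : ℝ) * (a ^ ((1:ℝ) + α) * a⁻¹)) * (η * ∫ y in Set.Ioi (0:ℝ), G y) := by
          ring
      _ = η * ∫ y in Set.Ioi (0:ℝ), G y := by rw [e4]; ring
  show Real.exp (-(η * ∫ y in Set.Ioi (0:ℝ),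
      (1 - Real.exp (-(c a * y))) * q y * y ^ (-1 - α : ℝ)))
      = ∑' n : ℕ, ((ν a) {n}).toReal * Real.exp (-(z * (a * n)))
  rw [← hkey, ← hpgf a ha' (Real.exp (-(z * a))) hs, hstep1]

set_option maxHeartbeats 1600000 in
theorem stmt6 (α η : ℝ) (hα : α ∈ Set.Ioo (0:ℝ) 1) (hη : 0 ≤ η)
    (q : ℝ → ℝ) (hqmeas : Measurable q) (hqnonneg : ∀ x, 0 ≤ q x)
    (C : ℝ) (hqbdd : ∀ x, q x ≤ C)
    (hq1 : Filter.Tendsto q (nhdsWithin 0 (Set.Ioi 0)) (nhds 1))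
    (hqint : IntegrableOn (fun x => min 1 x * q x * x ^ (-1 - α : ℝ)) (Set.Ioi 0))
    -- the laws of the random variables X_a ~ DTS_α(q_{1/a}, a^{-α} η),
    -- characterized by their probability generating functions
    (ν : ℝ → Measure ℕ) (hνprob : ∀ a : ℝ, 0 < a → IsProbabilityMeasure (ν a))
    (hpgf : ∀ a : ℝ, 0 < a → ∀ s ∈ Set.Ioc (0:ℝ) 1,
      (∑' n : ℕ, s ^ n * ((ν a) {n}).toReal) =
        Real.exp (-(a ^ (-α : ℝ) * η * ∫ x in Set.Ioi (0:ℝ),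
          (1 - Real.exp (-((1 - s) * x))) * q (a * x) * x ^ (-1 - α : ℝ))))
    -- the law μ = PTS_α(q, η), characterized by its Laplace transform
    (μ : Measure ℝ) [IsProbabilityMeasure μ] (hsupp : μ (Set.Iio 0) = 0)
    (hLT : ∀ z : ℝ, 0 ≤ z →
      ∫ x, Real.exp (-(z * x)) ∂μ =
        Real.exp (-(η * ∫ x in Set.Ioi (0:ℝ),
          (1 - Real.exp (-(z * x))) * q x * x ^ (-1 - α : ℝ)))) :
    -- conclusion: a · X_a converges in distribution to PTS_α(q, η) as a ↓ 0
    ∀ f : BoundedContinuousFunction ℝ ℝ,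
      Filter.Tendsto (fun a : ℝ => ∫ n : ℕ, f (a * n) ∂(ν a))
        (nhdsWithin 0 (Set.Ioi 0)) (nhds (∫ x, f x ∂μ)) := by
  intro f
  -- basic facts about f and μ
  set K : ℝ := ‖f‖ with hKdef
  have hK0 : 0 ≤ K := norm_nonneg f
  have hfb : ∀ x : ℝ, |f x| ≤ K := fun x => by
    rw [← Real.norm_eq_abs]; exact f.norm_coe_le_norm x
  have haepos : ∀ᵐ x ∂μ, 0 ≤ x := by
    rw [ae_iff]
    convert hsupp using 2
    ext x
    simp [Set.mem_Iio, not_le]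
  have hexpint : ∀ zz : ℝ, 0 ≤ zz → Integrable (fun x => Real.exp (-(zz * x))) μ := by
    intro zz hzz
    by_contra hcon
    have h0 := integral_undef hcon
    rw [hLT zz hzz] at h0
    exact (Real.exp_pos _).ne' h0
  -- convergence of the Laplace transform of μ at 0+
  have hLμ1 : Tendsto (fun zz : ℝ => ∫ x, Real.exp (-(zz * x)) ∂μ)
      (nhdsWithin 0 (Set.Ioi 0)) (nhds 1) := by
    have hid : Tendsto (fun zz : ℝ => zz) (nhdsWithin (0:ℝ) (Set.Ioi 0)) (nhds 0) :=
      tendsto_id.mono_left nhdsWithin_le_nhds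
    have hidb : ∀ᶠ zz in nhdsWithin (0:ℝ) (Set.Ioi 0), zz ∈ Set.Icc (0:ℝ) 1 := by
      filter_upwards [Ioo_mem_nhdsGT_of_mem (Set.mem_Ico.mpr ⟨le_refl 0, one_pos⟩)]
        with zz hzz
      exact ⟨hzz.1.le, hzz.2.le⟩
    have h0 := levy_tendsto α q hqmeas hqnonneg hqint 1 0 (fun zz => zz) hid hidb
    have hIzero : (∫ y in Set.Ioi (0:ℝ),
        (1 - Real.exp (-((0:ℝ) * y))) * q y * y ^ (-1 - α : ℝ)) = 0 := by
      simp
    rw [hIzero] at h0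
    have hcont : Continuous fun t : ℝ => Real.exp (-(η * t)) := by continuity
    have h1 := (hcont.tendsto 0).comp h0
    simp only [Function.comp, mul_zero, neg_zero, Real.exp_zero] at h1
    apply h1.congr'
    filter_upwards [self_mem_nhdsWithin] with zz (hzz : zz ∈ Set.Ioi (0:ℝ))
    exact (hLT zz (le_of_lt hzz)).symm
  -- start the epsilon argument
  rw [Metric.tendsto_nhds]
  intro ε hε
  set δ : ℝ := ε / 6 with hδdef
  have hδ : 0 < δ := by positivity
  set c0 : ℝ := (1 - Real.exp (-1 : ℝ))⁻¹ with hc0def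
  have he1 : Real.exp (-1 : ℝ) < 1 := Real.exp_lt_one_iff.mpr (by norm_num)
  have hc0 : 0 < c0 := by rw [hc0def]; exact inv_pos.mpr (by linarith)
  have hc0' : c0 * (1 - Real.exp (-1 : ℝ)) = 1 := by
    rw [hc0def]; exact inv_mul_cancel₀ (by linarith)
  -- choose z > 0 with K * c0 * (1 - Lμ z) < δ
  have hev : ∀ᶠ zz in nhdsWithin (0:ℝ) (Set.Ioi 0),
      K * c0 * (1 - ∫ x, Real.exp (-(zz * x)) ∂μ) < δ := by
    have ht : Tendsto (fun zz : ℝ => K * c0 * (1 - ∫ x, Real.exp (-(zz * x)) ∂μ))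
        (nhdsWithin 0 (Set.Ioi 0)) (nhds (K * c0 * (1 - 1))) :=
      ((hLμ1.const_sub 1).const_mul _)
    have : K * c0 * (1 - 1) < δ := by simpa using hδ
    exact ht.eventually_lt_const this
  obtain ⟨z, hzb, hz_pos⟩ := (hev.and self_mem_nhdsWithin).exists
  have hz0 : (0:ℝ) < z := hz_pos
  set M : ℝ := 1 / z with hMdef
  have hM0 : 0 < M := by positivity
  -- the truncation
  set ψ : ℝ → ℝ := fun x => min 1 (max 0 (M + 1 - x)) with hψdef
  have hψcont : Continuous ψ := by
    apply Continuous.min continuous_const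
    exact Continuous.max continuous_const (continuous_const.sub continuous_id)
  have hψ01 : ∀ x, 0 ≤ ψ x ∧ ψ x ≤ 1 := fun x =>
    ⟨le_min (by norm_num) (le_max_left _ _), min_le_left _ _⟩
  have hψ1 : ∀ x, x ≤ M → ψ x = 1 := by
    intro x hx
    simp only [hψdef]
    have h1 : (1:ℝ) ≤ M + 1 - x := by linarith
    rw [max_eq_right (by linarith), min_eq_left h1]
  have hψ0 : ∀ x, M + 1 ≤ x → ψ x = 0 := by
    intro x hx
    simp only [hψdef]
    rw [max_eq_left (by linarith), min_eq_right (by norm_num)]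
  set h : ℝ → ℝ := fun x => f x * ψ x with hhdef
  have hhcont : Continuous h := f.continuous.mul hψcont
  have hhb : ∀ x, |h x| ≤ K := by
    intro x
    simp only [hhdef, abs_mul]
    have h1 : |ψ x| ≤ 1 := by rw [abs_of_nonneg (hψ01 x).1]; exact (hψ01 x).2
    calc |f x| * |ψ x| ≤ K * 1 := mul_le_mul (hfb x) h1 (abs_nonneg _) hK0
      _ = K := mul_one K
  -- key pointwise bound for the truncation error
  have hdiff : ∀ x : ℝ, 0 ≤ x → |f x - h x| ≤ K * c0 * (1 - Real.exp (-(z * x))) := by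
    intro x hx
    have hexp0 : 0 ≤ 1 - Real.exp (-(z * x)) := one_sub_exp_nonneg (by positivity)
    rcases le_or_gt x M with hxM | hxM
    · simp only [hhdef, hψ1 x hxM, mul_one, sub_self, abs_zero]
      positivity
    · have h1 : |f x - h x| ≤ K := by
        simp only [hhdef]
        have heq : f x - f x * ψ x = f x * (1 - ψ x) := by ring
        rw [heq, abs_mul]
        have h2 : |1 - ψ x| ≤ 1 := by
          rw [abs_of_nonneg (by linarith [(hψ01 x).2])]; linarith [(hψ01 x).1]
        calc |f x| * |1 - ψ x| ≤ K * 1 := mul_le_mul (hfb x) h2 (abs_nonneg _) hK0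
          _ = K := mul_one K
      have h2 : (1:ℝ) ≤ z * x := by
        rw [hMdef] at hxM
        have h5 : 1 < x * z := (div_lt_iff₀ hz0).mp hxM
        nlinarith
      have h3 : Real.exp (-(z * x)) ≤ Real.exp (-1 : ℝ) :=
        Real.exp_le_exp.mpr (by linarith)
      have h4 : 1 ≤ c0 * (1 - Real.exp (-(z * x))) := by
        calc (1:ℝ) = c0 * (1 - Real.exp (-1 : ℝ)) := hc0'.symm
        _ ≤ c0 * (1 - Real.exp (-(z * x))) := by
            apply mul_le_mul_of_nonneg_left _ hc0.le
            linarith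
      calc |f x - h x| ≤ K := h1
      _ = K * 1 := (mul_one K).symm
      _ ≤ K * (c0 * (1 - Real.exp (-(z * x)))) := mul_le_mul_of_nonneg_left h4 hK0
      _ = K * c0 * (1 - Real.exp (-(z * x))) := by ring
  -- the compactified function F
  set F : ℝ → ℝ := fun t => h (-(Real.log (max t (Real.exp (-(M + 2)))))) with hFdef
  have hFcont : Continuous F := by
    apply hhcont.comp
    apply Continuous.neg
    apply Continuous.log (continuous_id.max continuous_const)
    intro x
    have := Real.exp_pos (-(M + 2))
    have : 0 < max x (Real.exp (-(M + 2))) := lt_max_of_lt_right this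
    exact this.ne'
  have hFh : ∀ x : ℝ, 0 ≤ x → F (Real.exp (-x)) = h x := by
    intro x hx
    rcases le_or_gt x (M + 2) with hxm | hxm
    · simp only [hFdef]
      rw [max_eq_left (Real.exp_le_exp.mpr (by linarith)), Real.log_exp, neg_neg]
    · simp only [hFdef]
      rw [max_eq_right (Real.exp_le_exp.mpr (by linarith : -x ≤ -(M+2))), Real.log_exp, neg_neg]
      simp only [hhdef]
      rw [hψ0 _ (by linarith), hψ0 _ (by linarith), mul_zero, mul_zero]
  have hFb : ∀ t, |F t| ≤ K := fun t => hhb _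
  -- polynomial approximation
  obtain ⟨p, hp⟩ := exists_polynomial_near_of_continuousOn 0 1 F hFcont.continuousOn δ hδ
  -- notation for the degree-truncated sum
  set dd : ℕ := p.natDegree + 1 with hdddef
  have hpeval : ∀ t : ℝ, p.eval t = ∑ i ∈ Finset.range dd, p.coeff i * t ^ i := fun t =>
    Polynomial.eval_eq_sum_range t
  -- convergence of the polynomial moments
  have hLa := fun (zz : ℝ) (hzz : 0 ≤ zz) =>
    La_tendsto α η hη q hqmeas hqnonneg hqint ν hνprob hpgf μ hLT zz hzz
  have hA : Tendsto (fun a : ℝ => ∑ i ∈ Finset.range dd,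
        p.coeff i * ∑' n : ℕ, ((ν a) {n}).toReal * Real.exp (-((i:ℝ) * (a * n))))
      (nhdsWithin 0 (Set.Ioi 0))
      (nhds (∑ i ∈ Finset.range dd, p.coeff i * ∫ x, Real.exp (-((i:ℝ) * x)) ∂μ)) := by
    apply tendsto_finset_sum
    intro i _
    exact (hLa (i:ℝ) (Nat.cast_nonneg i)).const_mul _
  -- identify the limit of hA with the integral of p ∘ exp
  have hPint : ∀ i : ℕ, Integrable (fun x => p.coeff i * Real.exp (-((i:ℝ) * x))) μ :=
    fun i => (hexpint (i:ℝ) (Nat.cast_nonneg i)).const_mul _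
  have hAlimit : (∑ i ∈ Finset.range dd, p.coeff i * ∫ x, Real.exp (-((i:ℝ) * x)) ∂μ)
      = ∫ x, p.eval (Real.exp (-x)) ∂μ := by
    have hpull : ∀ i : ℕ, p.coeff i * ∫ x, Real.exp (-((i:ℝ) * x)) ∂μ
        = ∫ x, p.coeff i * Real.exp (-((i:ℝ) * x)) ∂μ := fun i => (integral_const_mul _ _).symm
    simp only [hpull]
    rw [← integral_finset_sum _ (fun i _ => hPint i)]
    apply integral_congr_ae
    apply ae_of_all
    intro x
    show (∑ i ∈ Finset.range dd, p.coeff i * Real.exp (-((i:ℝ) * x)))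
      = p.eval (Real.exp (-x))
    rw [hpeval (Real.exp (-x))]
    apply Finset.sum_congr rfl
    intro i _
    rw [← Real.exp_nat_mul]
    ring_nf
  rw [hAlimit] at hA
  -- static integral bounds
  have hPb : ∀ᵐ x ∂μ, |p.eval (Real.exp (-x)) - h x| ≤ δ := by
    filter_upwards [haepos] with x hx
    have ht : Real.exp (-x) ∈ Set.Icc (0:ℝ) 1 :=
      ⟨(Real.exp_pos _).le, Real.exp_le_one_iff.mpr (by linarith)⟩
    have := hp (Real.exp (-x)) ht
    rw [hFh x hx] at this
    exact this.le
  have hpoly_int : Integrable (fun x => p.eval (Real.exp (-x))) μ := by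
    apply Integrable.mono' (integrable_const (K + δ))
    · exact (Polynomial.continuous p |>.comp
        (Real.continuous_exp.comp continuous_neg)).aestronglyMeasurable
    · filter_upwards [hPb] with x hx
      rw [Real.norm_eq_abs]
      have h2 := hhb x
      have h3 : |p.eval (Real.exp (-x))| ≤ |p.eval (Real.exp (-x)) - h x| + |h x| := by
        have h4 : p.eval (Real.exp (-x)) = (p.eval (Real.exp (-x)) - h x) + h x := by ring
        rw [h4]; exact (abs_add_le _ _).trans (by rw [← h4])
      calc |p.eval (Real.exp (-x))| ≤ |p.eval (Real.exp (-x)) - h x| + |h x| := h3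
        _ ≤ δ + K := add_le_add hx h2
        _ = K + δ := by ring
  have hh_int : Integrable h μ := by
    apply Integrable.mono' (integrable_const K) hhcont.aestronglyMeasurable
    exact ae_of_all _ fun x => by rw [Real.norm_eq_abs]; exact hhb x
  have hB4 : |(∫ x, p.eval (Real.exp (-x)) ∂μ) - ∫ x, h x ∂μ| ≤ δ := by
    rw [← integral_sub hpoly_int hh_int, ← Real.norm_eq_abs]
    calc ‖∫ x, (p.eval (Real.exp (-x)) - h x) ∂μ‖
        ≤ δ * (μ Set.univ).toReal := by
          apply norm_integral_le_of_norm_le_const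
          filter_upwards [hPb] with x hx
          rwa [Real.norm_eq_abs]
      _ = δ := by simp
  have hB5 : |(∫ x, h x ∂μ) - ∫ x, f x ∂μ| ≤ K * c0 * (1 - ∫ x, Real.exp (-(z * x)) ∂μ) := by
    have hfint : Integrable (fun x => f x) μ := f.integrable μ
    have hbnd_int : Integrable (fun x => K * c0 * (1 - Real.exp (-(z * x)))) μ :=
      ((integrable_const (1:ℝ)).sub (hexpint z hz0.le)).const_mul _
    rw [← integral_sub hh_int hfint, ← Real.norm_eq_abs]
    calc ‖∫ x, (h x - f x) ∂μ‖ ≤ ∫ x, ‖h x - f x‖ ∂μ := norm_integral_le_integral_norm _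
      _ ≤ ∫ x, K * c0 * (1 - Real.exp (-(z * x))) ∂μ := by
          apply integral_mono_ae (hh_int.sub hfint).norm hbnd_int
          filter_upwards [haepos] with x hx
          show ‖h x - f x‖ ≤ K * c0 * (1 - Real.exp (-(z * x)))
          rw [Real.norm_eq_abs, abs_sub_comm]
          exact hdiff x hx
      _ = K * c0 * (1 - ∫ x, Real.exp (-(z * x)) ∂μ) := by
          rw [integral_const_mul]
          congr 1
          rw [integral_sub (integrable_const 1) (hexpint z hz0.le)]
          simp
  -- eventual bounds
  have hevLa : ∀ᶠ a in nhdsWithin (0:ℝ) (Set.Ioi 0),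
      K * c0 * (1 - ∑' n : ℕ, ((ν a) {n}).toReal * Real.exp (-(z * (a * n)))) < δ := by
    have ht := ((hLa z hz0.le).const_sub 1).const_mul (K * c0)
    exact ht.eventually_lt_const hzb
  have hevA : ∀ᶠ a in nhdsWithin (0:ℝ) (Set.Ioi 0),
      |(∑ i ∈ Finset.range dd,
          p.coeff i * ∑' n : ℕ, ((ν a) {n}).toReal * Real.exp (-((i:ℝ) * (a * n))))
        - ∫ x, p.eval (Real.exp (-x)) ∂μ| < δ := by
    have := Metric.tendsto_nhds.mp hA δ hδ
    filter_upwards [this] with a ha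
    rwa [Real.dist_eq] at ha
  -- final assembly
  filter_upwards [hevLa, hevA, self_mem_nhdsWithin] with a hLa_small hA_close
    (ha : a ∈ Set.Ioi (0:ℝ))
  have ha' : (0:ℝ) < a := ha
  haveI : IsProbabilityMeasure (ν a) := hνprob a ha'
  set w : ℕ → ℝ := fun n => ((ν a) {n}).toReal with hwdef
  -- express the integral as a tsum
  have hS : (∫ n : ℕ, f (a * n) ∂(ν a)) = ∑' n : ℕ, w n * f (a * n) :=
    integral_eq_tsum (ν a) (fun n => f (a * n)) K (fun n => hfb _)
  -- 1st bound: truncation error on the ν side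
  have hexp_le_one : ∀ (u : ℝ), 0 ≤ u → Real.exp (-u) ≤ 1 :=
    fun u hu => Real.exp_le_one_iff.mpr (by linarith)
  have hb1sum : Summable fun n : ℕ =>
      w n * (K * c0 * (1 - Real.exp (-(z * (a * n))))) := by
    apply summable_w_mul (ν a) _ (K * c0)
    intro n
    have h1 : 0 ≤ 1 - Real.exp (-(z * (a * n))) := one_sub_exp_nonneg (by positivity)
    have h2 : 1 - Real.exp (-(z * (a * n))) ≤ 1 := by
      have := Real.exp_pos (-(z * (a * n))); linarith
    have h3 : 0 ≤ K * c0 := mul_nonneg hK0 hc0.le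
    rw [abs_of_nonneg (by positivity)]
    nlinarith
  have hb1 : |(∑' n : ℕ, w n * f (a * n)) - ∑' n : ℕ, w n * h (a * n)|
      ≤ ∑' n : ℕ, w n * (K * c0 * (1 - Real.exp (-(z * (a * n))))) := by
    apply abs_tsum_w_sub_le (ν a) _ _ _ K K (fun n => hfb _) (fun n => hhb _) _ hb1sum
    intro n
    exact hdiff (a * n) (by positivity)
  have hb1' : (∑' n : ℕ, w n * (K * c0 * (1 - Real.exp (-(z * (a * n))))))
      = K * c0 * (1 - ∑' n : ℕ, w n * Real.exp (-(z * (a * n)))) := by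
    have heq : ∀ n : ℕ, w n * (K * c0 * (1 - Real.exp (-(z * (a * n)))))
        = (K * c0) * (w n - w n * Real.exp (-(z * (a * n)))) := fun n => by ring
    rw [tsum_congr heq, tsum_mul_left]
    congr 1
    rw [Summable.tsum_sub (summable_w (ν a)) (summable_w_mul (ν a) _ 1
      (fun n => by rw [abs_of_nonneg (Real.exp_pos _).le]; exact hexp_le_one _ (by positivity)))]
    rw [tsum_w_eq_one (ν a)]
  -- 2nd bound: polynomial approximation error on the ν side
  have hb2 : |(∑' n : ℕ, w n * h (a * n)) - ∑' n : ℕ, w n * p.eval (Real.exp (-(a * n)))|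
      ≤ ∑' n : ℕ, w n * δ := by
    apply abs_tsum_w_sub_le (ν a) _ _ _ K (K + δ) (fun n => hhb _) _ _
      ((summable_w (ν a)).mul_right δ)
    · intro n
      have ht : Real.exp (-(a * n)) ∈ Set.Icc (0:ℝ) 1 :=
        ⟨(Real.exp_pos _).le, hexp_le_one _ (by positivity)⟩
      have h1 := hp (Real.exp (-(a * n))) ht
      rw [hFh (a * n) (by positivity)] at h1
      have h3 : |p.eval (Real.exp (-(a * n)))|
          ≤ |p.eval (Real.exp (-(a * n))) - h (a * n)| + |h (a * n)| := by
        have h4 : p.eval (Real.exp (-(a * n)))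
            = (p.eval (Real.exp (-(a * n))) - h (a * n)) + h (a * n) := by ring
        rw [h4]; exact (abs_add_le _ _).trans (by rw [← h4])
      calc |p.eval (Real.exp (-(a * n)))|
          ≤ |p.eval (Real.exp (-(a * n))) - h (a * n)| + |h (a * n)| := h3
        _ ≤ δ + K := add_le_add h1.le (hhb _)
        _ = K + δ := by ring
    · intro n
      have ht : Real.exp (-(a * n)) ∈ Set.Icc (0:ℝ) 1 :=
        ⟨(Real.exp_pos _).le, hexp_le_one _ (by positivity)⟩
      have h1 := hp (Real.exp (-(a * n))) ht
      rw [hFh (a * n) (by positivity)] at h1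
      rw [abs_sub_comm]
      exact h1.le
  have hb2' : (∑' n : ℕ, w n * δ) = δ := by
    rw [tsum_mul_right, tsum_w_eq_one (ν a), one_mul]
  -- 3rd: identify the tsum of the polynomial with the moment sum
  have hb3 : (∑' n : ℕ, w n * p.eval (Real.exp (-(a * n))))
      = ∑ i ∈ Finset.range dd, p.coeff i * ∑' n : ℕ, w n * Real.exp (-((i:ℝ) * (a * n))) := by
    have heq : ∀ n : ℕ, w n * p.eval (Real.exp (-(a * n)))
        = ∑ i ∈ Finset.range dd, p.coeff i * (w n * Real.exp (-((i:ℝ) * (a * n)))) := by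
      intro n
      rw [hpeval]
      rw [Finset.mul_sum]
      apply Finset.sum_congr rfl
      intro i _
      rw [← Real.exp_nat_mul]
      ring_nf
    rw [tsum_congr heq]
    rw [Summable.tsum_finsetSum]
    · apply Finset.sum_congr rfl
      intro i _
      rw [tsum_mul_left]
    · intro i _
      apply Summable.mul_left
      apply summable_w_mul (ν a) _ 1
      intro n
      rw [abs_of_nonneg (Real.exp_pos _).le]
      exact hexp_le_one _ (by positivity)
  -- put everything together
  rw [Real.dist_eq, hS]
  have key : |(∑' n : ℕ, w n * f (a * n)) - ∫ x, f x ∂μ| < 5 * δ := by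
    have t1 : |(∑' n : ℕ, w n * f (a * n)) - ∑' n : ℕ, w n * h (a * n)| < δ := by
      calc |(∑' n : ℕ, w n * f (a * n)) - ∑' n : ℕ, w n * h (a * n)|
          ≤ K * c0 * (1 - ∑' n : ℕ, w n * Real.exp (-(z * (a * n)))) := by
            rw [← hb1']; exact hb1
        _ < δ := hLa_small
    have t2 : |(∑' n : ℕ, w n * h (a * n)) - ∑' n : ℕ, w n * p.eval (Real.exp (-(a * n)))|
        ≤ δ := by rw [← hb2']; exact hb2
    have t3 : |(∑' n : ℕ, w n * p.eval (Real.exp (-(a * n))))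
        - ∫ x, p.eval (Real.exp (-x)) ∂μ| < δ := by
      rw [hb3]; exact hA_close
    have t5 : |(∫ x, h x ∂μ) - ∫ x, f x ∂μ| < δ := lt_of_le_of_lt hB5 hzb
    calc |(∑' n : ℕ, w n * f (a * n)) - ∫ x, f x ∂μ|
        ≤ |(∑' n : ℕ, w n * f (a * n)) - ∑' n : ℕ, w n * h (a * n)|
          + |(∑' n : ℕ, w n * h (a * n)) - ∑' n : ℕ, w n * p.eval (Real.exp (-(a * n)))|
          + |(∑' n : ℕ, w n * p.eval (Real.exp (-(a * n)))) - ∫ x, p.eval (Real.exp (-x)) ∂μ|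
          + |(∫ x, p.eval (Real.exp (-x)) ∂μ) - ∫ x, h x ∂μ|
          + |(∫ x, h x ∂μ) - ∫ x, f x ∂μ| := by
            set A1 := ∑' n : ℕ, w n * f (a * n)
            set A2 := ∑' n : ℕ, w n * h (a * n)
            set A3 := ∑' n : ℕ, w n * p.eval (Real.exp (-(a * n)))
            set A4 := ∫ x, p.eval (Real.exp (-x)) ∂μ
            set A5 := ∫ x, h x ∂μ
            set A6 := ∫ x, f x ∂μ
            have i1 := abs_sub_le A1 A2 A6
            have i2 := abs_sub_le A2 A3 A6
            have i3 := abs_sub_le A3 A4 A6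
            have i4 := abs_sub_le A4 A5 A6
            linarith
      _ < δ + δ + δ + δ + δ := by linarith [t1, t2, t3, hB4, t5]
      _ = 5 * δ := by ring
  calc |(∑' n : ℕ, w n * f (a * n)) - ∫ x, f x ∂μ| < 5 * δ := key
    _ < ε := by rw [hδdef]; linarith
end

section
/- Under the same setup (μ regularly varying with tail t^{-α} L(t), α ∈ (0,1), a_n = 1/V^←(n), M_n(A) = n∫1_A(a_n x)μ(dx)), one has lim_{ε↓0} limsup_{n→∞} ∫_{[0,ε)} x M_n(dx) = 0. -/
open MeasureTheory Real Set Filter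
open scoped Topology ENNReal

private lemma potter {G : ℝ → ℝ} {p t₀ : ℝ} (hp : 0 < p) (ht₀ : 0 < t₀)
    (hanti : Antitone G) (hGnn : ∀ s, 0 ≤ G s)
    (hdb : ∀ u, t₀ ≤ u → (2:ℝ) ^ (-p) * G u ≤ G (2 * u)) :
    ∀ s t : ℝ, t₀ ≤ s → s ≤ t → G s ≤ 2 ^ p * (t / s) ^ p * G t := by
  have key : ∀ (m : ℕ) (u : ℝ), t₀ ≤ u →
      (2:ℝ) ^ (-(p * m)) * G u ≤ G (2 ^ m * u) := by
    intro m
    induction m with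
    | zero => intro u hu; simp
    | succ m ih =>
      intro u hu
      have hu0 : 0 < u := lt_of_lt_of_le ht₀ hu
      have h2m : (1:ℝ) ≤ 2 ^ m := one_le_pow₀ (by norm_num)
      have h1 : t₀ ≤ 2 ^ m * u := le_trans hu (le_mul_of_one_le_left hu0.le h2m)
      have h2 := hdb _ h1
      have h3 := ih u hu
      have h4 : (2:ℝ) ^ (-p) * ((2:ℝ) ^ (-(p * m)) * G u) ≤ (2:ℝ) ^ (-p) * G (2 ^ m * u) :=
        mul_le_mul_of_nonneg_left h3 (Real.rpow_nonneg (by norm_num) _)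
      have h5 : (2:ℝ) ^ (-(p * (m + 1 : ℕ))) * G u
          = (2:ℝ) ^ (-p) * ((2:ℝ) ^ (-(p * m)) * G u) := by
        rw [← mul_assoc, ← Real.rpow_add (by norm_num)]
        push_cast
        ring_nf
      rw [h5]
      calc (2:ℝ) ^ (-p) * ((2:ℝ) ^ (-(p * m)) * G u)
          ≤ (2:ℝ) ^ (-p) * G (2 ^ m * u) := h4
        _ ≤ G (2 * (2 ^ m * u)) := h2
        _ = G (2 ^ (m + 1) * u) := by ring_nf
  intro s t hs hst
  have hs0 : 0 < s := lt_of_lt_of_le ht₀ hs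
  have ht0 : 0 < t := lt_of_lt_of_le hs0 hst
  set r := t / s with hr
  have hr1 : 1 ≤ r := (one_le_div hs0).2 hst
  have hr0 : 0 < r := lt_of_lt_of_le one_pos hr1
  set m := ⌈Real.logb 2 r⌉₊ with hm
  have hlog0 : 0 ≤ Real.logb 2 r := Real.logb_nonneg (by norm_num) hr1
  have hm1 : r ≤ 2 ^ m := by
    have := Nat.le_ceil (Real.logb 2 r)
    calc r = (2:ℝ) ^ (Real.logb 2 r) := (Real.rpow_logb (by norm_num) (by norm_num) hr0).symm
      _ ≤ (2:ℝ) ^ (m:ℝ) := by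
          exact Real.rpow_le_rpow_of_exponent_le (by norm_num) this
      _ = 2 ^ m := by rw [Real.rpow_natCast]
  have hm2 : (2:ℝ) ^ m ≤ 2 * r := by
    have h1 : (m:ℝ) ≤ Real.logb 2 r + 1 := (Nat.ceil_lt_add_one hlog0).le
    calc (2:ℝ) ^ m = (2:ℝ) ^ (m:ℝ) := by rw [Real.rpow_natCast]
      _ ≤ (2:ℝ) ^ (Real.logb 2 r + 1) := Real.rpow_le_rpow_of_exponent_le (by norm_num) h1
      _ = 2 * r := by
          rw [Real.rpow_add (by norm_num), Real.rpow_logb (by norm_num) (by norm_num) hr0,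
            Real.rpow_one]; ring
  have hkey := key m s hs
  have hts : t ≤ 2 ^ m * s := by
    have : r * s ≤ 2 ^ m * s := mul_le_mul_of_nonneg_right hm1 hs0.le
    rwa [hr, div_mul_cancel₀ _ hs0.ne'] at this
  have h6 : (2:ℝ) ^ (-(p * m)) * G s ≤ G t := le_trans hkey (hanti hts)
  -- multiply both sides by 2^(p*m)
  have hpos : (0:ℝ) < (2:ℝ) ^ (-(p * m)) := Real.rpow_pos_of_pos (by norm_num) _
  have h7 : G s ≤ (2:ℝ) ^ (p * m) * G t := by
    rw [← mul_le_mul_iff_right₀ hpos, ← mul_assoc, ← Real.rpow_add (by norm_num)]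
    simpa using h6
  have h8 : (2:ℝ) ^ (p * (m:ℝ)) ≤ (2 * r) ^ p := by
    rw [mul_comm p, Real.rpow_mul (by norm_num : (0:ℝ) ≤ 2), Real.rpow_natCast]
    exact Real.rpow_le_rpow (by positivity) hm2 hp.le
  have h9 : (2 * r) ^ p = 2 ^ p * r ^ p := Real.mul_rpow (by norm_num) hr0.le
  calc G s ≤ (2:ℝ) ^ (p * m) * G t := h7
    _ ≤ (2 * r) ^ p * G t := mul_le_mul_of_nonneg_right h8 (hGnn t)
    _ = 2 ^ p * r ^ p * G t := by rw [h9]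

private lemma intOn (μ : Measure ℝ) [IsFiniteMeasure μ] (c d : ℝ) :
    IntegrableOn (fun x : ℝ => x) (Ico c d) μ := by
  apply Measure.integrableOn_of_bounded (M := max |c| |d|) (measure_ne_top μ _)
    aestronglyMeasurable_id
  filter_upwards [ae_restrict_mem measurableSet_Ico] with x hx
  simp only [id_eq, Real.norm_eq_abs]
  rcases hx with ⟨h1, h2⟩
  rcases abs_cases x with ⟨he, _⟩ | ⟨he, _⟩
  · rw [he]; exact le_trans h2.le (le_trans (le_abs_self d) (le_max_right _ _))
  · rw [he]; exact le_trans (neg_le_neg h1) (le_trans (neg_le_abs c) (le_max_left _ _))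

private lemma piece_le (μ : Measure ℝ) [IsProbabilityMeasure μ] {c d : ℝ} (hc : 0 ≤ c)
    (hcd : c ≤ d) : ∫ x in Ico c d, x ∂μ ≤ d * (μ (Ico c d)).toReal := by
  calc ∫ x in Ico c d, x ∂μ ≤ ∫ _x in Ico c d, d ∂μ := by
        apply setIntegral_mono_on (intOn μ c d) (integrableOn_const (measure_ne_top _ _))
          measurableSet_Ico
        intro x hx; exact hx.2.le
    _ = (μ (Ico c d)).toReal * d := by rw [setIntegral_const, smul_eq_mul, measureReal_def]
    _ = d * (μ (Ico c d)).toReal := mul_comm _ _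

private lemma dyadic (μ : Measure ℝ) [IsProbabilityMeasure μ] {T : ℝ} (hT : 0 < T) :
    ∀ K : ℕ, ∫ x in Ico (0:ℝ) T, x ∂μ ≤ (∫ x in Ico (0:ℝ) (T / 2 ^ K), x ∂μ)
      + ∑ k ∈ Finset.range K, (T / 2 ^ k) * (μ (Ioi (T / 2 ^ (k + 2)))).toReal := by
  intro K
  induction K with
  | zero => simp
  | succ K ih =>
    refine le_trans ih ?_
    rw [Finset.sum_range_succ]
    have hstep : ∫ x in Ico (0:ℝ) (T / 2 ^ K), x ∂μ ≤ (∫ x in Ico (0:ℝ) (T / 2 ^ (K+1)), x ∂μ)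
        + (T / 2 ^ K) * (μ (Ioi (T / 2 ^ (K + 2)))).toReal := by
      set u : ℝ := T / 2 ^ (K + 1) with hu
      have hu0 : 0 < u := by positivity
      have h2u : T / 2 ^ K = 2 * u := by rw [hu]; ring
      have hsplit : Ico (0:ℝ) (T / 2 ^ K) = Ico 0 u ∪ Ico u (2 * u) := by
        rw [h2u, Set.Ico_union_Ico_eq_Ico hu0.le (by linarith)]
      have hdisj : Disjoint (Ico (0:ℝ) u) (Ico u (2 * u)) :=
        Set.Ico_disjoint_Ico_same
      have hun := setIntegral_union hdisj measurableSet_Ico (intOn μ 0 u) (intOn μ u (2*u))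
        (f := fun x : ℝ => x)
      rw [hsplit, hun]
      apply add_le_add le_rfl
      calc ∫ x in Ico u (2*u), x ∂μ ≤ (2*u) * (μ (Ico u (2*u))).toReal :=
            piece_le μ hu0.le (by linarith)
        _ ≤ (2*u) * (μ (Ioi (u/2))).toReal := by
            apply mul_le_mul_of_nonneg_left _ (by linarith)
            apply ENNReal.toReal_mono (measure_ne_top μ _)
            apply measure_mono
            intro x hx
            simp only [mem_Ioi]
            have := hx.1
            linarith
        _ = (T / 2 ^ K) * (μ (Ioi (T / 2 ^ (K + 2)))).toReal := by
            rw [h2u]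
            congr 2
            rw [hu]; ring
    linarith

private lemma int_zero (μ : Measure ℝ) [IsProbabilityMeasure μ] (hsupp : μ (Set.Iio 0) = 0)
    {c : ℝ} (hc : c ≤ 0) (ε : ℝ) :
    ∫ y in Set.Ico (0:ℝ) ε, y ∂(Measure.map (fun x => c * x) μ) = 0 := by
  have hmeas : Measurable fun x : ℝ => c * x := measurable_id.const_mul c
  have hν : Measure.map (fun x => c * x) μ (Ioi 0) = 0 := by
    rw [Measure.map_apply hmeas measurableSet_Ioi]
    refine measure_mono_null ?_ hsupp
    intro x hx
    simp only [mem_preimage, mem_Ioi] at hx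
    simp only [mem_Iio]
    by_contra h
    push_neg at h
    nlinarith
  rw [← integral_indicator measurableSet_Ico]
  apply integral_eq_zero_of_ae
  have hae : ∀ᵐ y ∂(Measure.map (fun x => c * x) μ), y ∉ Ioi (0:ℝ) := by
    rw [ae_iff]
    simp only [not_not, setOf_mem_eq]; exact hν
  filter_upwards [hae] with y hy
  by_cases hmem : y ∈ Ico (0:ℝ) ε
  · rw [Set.indicator_of_mem hmem]
    simp only [mem_Ioi, not_lt] at hy
    exact le_antisymm hy hmem.1
  · rw [Set.indicator_of_notMem hmem]; simp

set_option maxHeartbeats 2000000 in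
theorem stmt10 (α : ℝ) (hα : α ∈ Set.Ioo (0:ℝ) 1)
    (μ : Measure ℝ) [IsProbabilityMeasure μ] (hsupp : μ (Set.Iio 0) = 0)
    (L : ℝ → ℝ) (hLpos : ∀ t > (0:ℝ), 0 < L t)
    (hLsv : ∀ x > (0:ℝ), Filter.Tendsto (fun t => L (x * t) / L t) Filter.atTop (nhds 1))
    (htail : ∀ t > (0:ℝ), (μ (Set.Ioi t)).toReal = t ^ (-α : ℝ) * L t)
    (V Vinv a : ℝ → ℝ)
    (hV : ∀ t, V t = t ^ (α : ℝ) / L t)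
    (hVinv : ∀ t, Vinv t = sInf {s : ℝ | V s > t})
    (ha : ∀ t, a t = 1 / Vinv t) :
    Filter.Tendsto
      (fun ε : ℝ => Filter.limsup
        (fun n : ℕ =>
          (n : ℝ) * ∫ y in Set.Ico (0:ℝ) ε, y ∂(Measure.map (fun x => a n * x) μ))
        Filter.atTop)
      (nhdsWithin 0 (Set.Ioi 0)) (nhds 0) := by
  obtain ⟨hα0, hα1⟩ := hα
  set G : ℝ → ℝ := fun s => (μ (Ioi s)).toReal with hGdef
  have hGanti : Antitone G := fun s t hst =>
    ENNReal.toReal_mono (measure_ne_top μ _) (measure_mono (Ioi_subset_Ioi hst))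
  have hGnn : ∀ s, 0 ≤ G s := fun s => ENNReal.toReal_nonneg
  have hGle1 : ∀ s, G s ≤ 1 := by
    intro s
    have h1 : (μ (Ioi s)).toReal ≤ (μ univ).toReal :=
      ENNReal.toReal_mono (measure_ne_top μ _) (measure_mono (subset_univ _))
    simpa using h1
  have hGeq : ∀ s, 0 < s → G s = s ^ (-α) * L s := fun s hs => htail s hs
  have hGpos : ∀ s, 0 < s → 0 < G s := by
    intro s hs
    rw [hGeq s hs]
    have := hLpos s hs
    positivity
  have hGV : ∀ s, 0 < s → V s = (G s)⁻¹ := by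
    intro s hs
    rw [hV, hGeq s hs, Real.rpow_neg hs.le, mul_inv, inv_inv, div_eq_mul_inv]
  have hVmono : ∀ s t : ℝ, 0 < s → s ≤ t → V s ≤ V t := by
    intro s t hs hst
    rw [hGV s hs, hGV t (lt_of_lt_of_le hs hst)]
    exact inv_anti₀ (hGpos t (lt_of_lt_of_le hs hst)) (hGanti hst)
  have hGsmall : ∀ c : ℝ, 0 < c → ∃ M : ℝ, 1 ≤ M ∧ G M < c := by
    intro c hc
    have h1 : Tendsto (fun n : ℕ => μ (Ioi (n:ℝ))) atTop (𝓝 (μ (⋂ n : ℕ, Ioi (n:ℝ)))) := by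
      apply tendsto_measure_iInter_atTop
        (fun i => measurableSet_Ioi.nullMeasurableSet)
        (fun i j hij => Ioi_subset_Ioi (Nat.cast_le.2 hij))
        ⟨0, measure_ne_top μ _⟩
    have h2 : (⋂ n : ℕ, Ioi (n:ℝ)) = ∅ := by
      apply Set.eq_empty_iff_forall_notMem.2
      intro x hx
      obtain ⟨n, hn⟩ := exists_nat_gt x
      exact absurd (mem_iInter.1 hx n) (by simpa using hn.le)
    rw [h2, measure_empty] at h1
    have h3 : Tendsto (fun n : ℕ => G (n:ℝ)) atTop (𝓝 0) := by
      have := (ENNReal.tendsto_toReal (by simp : (0:ℝ≥0∞) ≠ ⊤)).comp h1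
      exact this
    obtain ⟨n, hn⟩ := (h3.eventually (eventually_lt_nhds hc)).exists
    refine ⟨max (n:ℝ) 1, le_max_right _ _, lt_of_le_of_lt (hGanti (le_max_left _ _)) hn⟩
  -- doubling
  set p : ℝ := α + (1 - α) / 2 with hpdef
  have hp0 : 0 < p := by rw [hpdef]; linarith
  have hp1 : p < 1 := by rw [hpdef]; linarith
  have hδ0 : 0 < 1 - p := by linarith
  have hdb : ∃ t₀ : ℝ, 1 ≤ t₀ ∧ ∀ u, t₀ ≤ u → (2:ℝ) ^ (-p) * G u ≤ G (2 * u) := by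
    have h2δ : (2:ℝ) ^ (-((1-α)/2)) < 1 :=
      Real.rpow_lt_one_of_one_lt_of_neg (by norm_num) (by linarith)
    have hev : ∀ᶠ t in atTop, (2:ℝ) ^ (-((1-α)/2)) < L (2 * t) / L t :=
      (hLsv 2 (by norm_num)).eventually (eventually_gt_nhds h2δ)
    obtain ⟨t₀', ht₀'⟩ := eventually_atTop.1 hev
    refine ⟨max t₀' 1, le_max_right _ _, ?_⟩
    intro u hu
    have hu1 : (1:ℝ) ≤ u := le_trans (le_max_right _ _) hu
    have hu0 : 0 < u := lt_of_lt_of_le one_pos hu1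
    have hL : (2:ℝ) ^ (-((1-α)/2)) * L u ≤ L (2 * u) := by
      have h1 := ht₀' u (le_trans (le_max_left _ _) hu)
      have hLu := hLpos u hu0
      rw [lt_div_iff₀ hLu] at h1
      exact h1.le
    rw [hGeq u hu0, hGeq (2*u) (by linarith)]
    have hrw : ((2:ℝ) * u) ^ (-α) = (2:ℝ) ^ (-α) * u ^ (-α) :=
      Real.mul_rpow (by norm_num) hu0.le
    rw [hrw]
    have h2 : (2:ℝ) ^ (-p) = (2:ℝ) ^ (-α) * (2:ℝ) ^ (-((1-α)/2)) := by
      rw [← Real.rpow_add (by norm_num)]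
      congr 1
      rw [hpdef]; ring
    rw [h2]
    have hnn : (0:ℝ) ≤ (2:ℝ) ^ (-α) * u ^ (-α) := by positivity
    calc (2:ℝ) ^ (-α) * (2:ℝ) ^ (-((1-α)/2)) * (u ^ (-α) * L u)
        = ((2:ℝ) ^ (-α) * u ^ (-α)) * ((2:ℝ) ^ (-((1-α)/2)) * L u) := by ring
      _ ≤ ((2:ℝ) ^ (-α) * u ^ (-α)) * L (2 * u) := mul_le_mul_of_nonneg_left hL hnn
  obtain ⟨t₀, ht₀1, hdb⟩ := hdb
  have ht₀0 : (0:ℝ) < t₀ := lt_of_lt_of_le one_pos ht₀1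
  have hpot := potter hp0 ht₀0 hGanti hGnn hdb
  -- nonnegativity of terms
  have hnonneg : ∀ (c ε : ℝ), 0 ≤ ∫ y in Ico (0:ℝ) ε, y ∂(Measure.map (fun x => c * x) μ) := by
    intro c ε
    apply setIntegral_nonneg measurableSet_Ico
    intro y hy
    exact hy.1
  by_cases hgood : ∃ t₁ : ℝ, ∀ s ≤ (0:ℝ), V s ≤ t₁
  case neg =>
    push_neg at hgood
    have hVle : ∀ t : ℝ, Vinv t ≤ 0 := by
      intro t
      obtain ⟨s, hs0, hVs⟩ := hgood t
      rw [hVinv]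
      by_cases hbb : BddBelow {s : ℝ | V s > t}
      · exact le_trans (csInf_le hbb hVs) hs0
      · rw [Real.sInf_of_not_bddBelow hbb]
    have hzero : ∀ (t ε : ℝ),
        ∫ y in Ico (0:ℝ) ε, y ∂(Measure.map (fun x => a t * x) μ) = 0 := by
      intro t ε
      apply int_zero μ hsupp _ ε
      rw [ha]
      exact one_div_nonpos.2 (hVle t)
    have hF : ∀ ε : ℝ, Filter.limsup (fun n : ℕ =>
        (n : ℝ) * ∫ y in Set.Ico (0:ℝ) ε, y ∂(Measure.map (fun x => a n * x) μ)) atTop = 0 := by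
      intro ε
      have he : (fun n : ℕ =>
          (n : ℝ) * ∫ y in Set.Ico (0:ℝ) ε, y ∂(Measure.map (fun x => a n * x) μ))
          = fun _ => (0:ℝ) := by
        funext n
        rw [hzero n ε, mul_zero]
      rw [he, limsup_const]
    exact Tendsto.congr (fun ε => (hF ε).symm) tendsto_const_nhds
  case pos =>
    obtain ⟨t₁, ht₁⟩ := hgood
    have hSpos : ∀ t : ℝ, t₁ < t → ∀ s, V s > t → 0 < s := by
      intro t ht s hs
      by_contra h
      push_neg at h
      exact absurd hs (not_lt.2 (le_trans (ht₁ s h) ht.le))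
    have hSne : ∀ t : ℝ, 0 ≤ t → {s : ℝ | V s > t}.Nonempty := by
      intro t ht
      obtain ⟨M, hM1, hMG⟩ := hGsmall (1/(t+1)) (by positivity)
      refine ⟨M, ?_⟩
      have hM0 : (0:ℝ) < M := lt_of_lt_of_le one_pos hM1
      have h1 : V M = (G M)⁻¹ := hGV M hM0
      have h2 : (t+1 : ℝ) < (G M)⁻¹ := by
        rw [lt_inv_comm₀ (by positivity) (hGpos M hM0)]
        rwa [one_div] at hMG
      simp only [mem_setOf_eq, h1]
      linarith
    have hb_ge : ∀ M : ℝ, 1 ≤ M → ∀ t : ℝ, t₁ < t → (G M)⁻¹ < t → M ≤ Vinv t := by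
      intro M hM1 t ht hGMt
      have hM0 : (0:ℝ) < M := lt_of_lt_of_le one_pos hM1
      have ht0 : (0:ℝ) ≤ t := le_trans (by positivity : (0:ℝ) ≤ (G M)⁻¹) hGMt.le
      rw [hVinv]
      apply le_csInf (hSne t ht0)
      intro s hs
      by_contra h
      push_neg at h
      have hs0 : 0 < s := hSpos t ht s hs
      have : V s ≤ V M := hVmono s M hs0 h.le
      rw [hGV M hM0] at this
      exact absurd hs (not_lt.2 (le_trans this hGMt.le))
    have hb_tendsto : Tendsto (fun n : ℕ => Vinv (n:ℝ)) atTop atTop := by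
      apply tendsto_atTop.2
      intro M
      set M' : ℝ := max M 1 with hM'
      have hM'1 : 1 ≤ M' := le_max_right _ _
      have hM'0 : (0:ℝ) < M' := lt_of_lt_of_le one_pos hM'1
      have hcast : Tendsto (fun n : ℕ => (n:ℝ)) atTop atTop := tendsto_natCast_atTop_atTop
      filter_upwards [hcast.eventually (eventually_gt_atTop t₁),
        hcast.eventually (eventually_gt_atTop (G M')⁻¹)] with n h1 h2
      exact le_trans (le_max_left _ _) (hb_ge M' hM'1 _ h1 h2)
    have hGb : ∀ t : ℝ, t₁ < t → 0 < t → 0 < Vinv t → ∀ s, Vinv t < s → G s < t⁻¹ := by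
      intro t ht ht0 hbt s hs
      have hs0 : 0 < s := lt_trans hbt hs
      rw [hVinv] at hs
      obtain ⟨s', hs', hs's⟩ := exists_lt_of_csInf_lt (hSne t ht0.le) hs
      have hs'0 : 0 < s' := hSpos t ht s' hs'
      have h1 : V s' ≤ V s := hVmono s' s hs'0 hs's.le
      have h2 : t < (G s)⁻¹ := lt_of_lt_of_le hs' (by rwa [hGV s hs0] at h1)
      rwa [lt_inv_comm₀ ht0 (hGpos s hs0)] at h2
    -- n / b_n → 0
    have hnb : Tendsto (fun n : ℕ => (n:ℝ) / Vinv (n:ℝ)) atTop (𝓝 0) := by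
      have hC₅ : (0:ℝ) < 2 ^ p * (2/t₀) ^ p / G t₀ := by
        have := hGpos t₀ ht₀0
        positivity
      set C₅ : ℝ := 2 ^ p * (2/t₀) ^ p / G t₀ with hC₅def
      have hup : ∀ᶠ n : ℕ in atTop, (n:ℝ) / Vinv (n:ℝ) ≤ C₅ * (Vinv (n:ℝ)) ^ (p - 1) := by
        have hcast : Tendsto (fun n : ℕ => (n:ℝ)) atTop atTop := tendsto_natCast_atTop_atTop
        filter_upwards [hcast.eventually (eventually_gt_atTop t₁),
          hcast.eventually (eventually_gt_atTop 0),
          hb_tendsto.eventually (eventually_ge_atTop t₀)] with n h1 h2 h3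
        set b : ℝ := Vinv (n:ℝ) with hbdef
        have hb0 : 0 < b := lt_of_lt_of_le ht₀0 h3
        have hG2b : G (2*b) < ((n:ℝ))⁻¹ := hGb _ h1 h2 hb0 _ (by linarith)
        have hnG2b : (n:ℝ) * G (2*b) ≤ 1 := by
          rcases (hGnn (2*b)).eq_or_lt with h | h
          · rw [← h]; simp
          · calc (n:ℝ) * G (2*b) ≤ (n:ℝ) * (n:ℝ)⁻¹ :=
                mul_le_mul_of_nonneg_left hG2b.le h2.le
              _ ≤ 1 := by rw [mul_inv_cancel₀ h2.ne']
        have hP : G t₀ ≤ 2 ^ p * ((2*b)/t₀) ^ p * G (2*b) :=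
          hpot t₀ (2*b) le_rfl (by linarith)
        -- n * G t₀ ≤ 2^p ((2b)/t₀)^p * (n * G(2b)) ≤ 2^p (2/t₀)^p b^p
        have h4 : (n:ℝ) * G t₀ ≤ 2 ^ p * (2/t₀) ^ p * b ^ p := by
          have e1 : ((2*b)/t₀ : ℝ) ^ p = (2/t₀) ^ p * b ^ p := by
            rw [show ((2*b)/t₀ : ℝ) = (2/t₀) * b by ring,
              Real.mul_rpow (by positivity) hb0.le]
          calc (n:ℝ) * G t₀ ≤ (n:ℝ) * (2 ^ p * ((2*b)/t₀) ^ p * G (2*b)) :=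
              mul_le_mul_of_nonneg_left hP h2.le
            _ = 2 ^ p * ((2*b)/t₀) ^ p * ((n:ℝ) * G (2*b)) := by ring
            _ ≤ 2 ^ p * ((2*b)/t₀) ^ p * 1 := by
                apply mul_le_mul_of_nonneg_left hnG2b (by positivity)
            _ = 2 ^ p * (2/t₀) ^ p * b ^ p := by rw [e1]; ring
        have h5 : (n:ℝ) ≤ 2 ^ p * (2/t₀) ^ p * b ^ p / G t₀ := by
          rw [le_div_iff₀ (hGpos t₀ ht₀0)]
          exact h4
        calc (n:ℝ) / b ≤ (2 ^ p * (2/t₀) ^ p * b ^ p / G t₀) / b :=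
              (div_le_div_iff_of_pos_right hb0).2 h5
          _ = C₅ * b ^ (p - 1) := by
              rw [hC₅def, Real.rpow_sub hb0, Real.rpow_one]
              field_simp
      have hlo : ∀ᶠ n : ℕ in atTop, 0 ≤ (n:ℝ) / Vinv (n:ℝ) := by
        filter_upwards [hb_tendsto.eventually (eventually_ge_atTop t₀)] with n h3
        have hb0 : 0 < Vinv (n:ℝ) := lt_of_lt_of_le ht₀0 h3
        positivity
      have hCtend : Tendsto (fun n : ℕ => C₅ * (Vinv (n:ℝ)) ^ (p - 1)) atTop (𝓝 0) := by
        have h1 : Tendsto (fun x : ℝ => x ^ (-(1 - p))) atTop (𝓝 0) :=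
          tendsto_rpow_neg_atTop hδ0
        have h2 : Tendsto (fun n : ℕ => (Vinv (n:ℝ)) ^ (p - 1)) atTop (𝓝 0) := by
          have := h1.comp hb_tendsto
          simpa [neg_sub, Function.comp_def] using this
        simpa using h2.const_mul C₅
      exact tendsto_of_tendsto_of_tendsto_of_le_of_le' tendsto_const_nhds hCtend hlo hup
    -- geometric ratio
    set r : ℝ := 2 ^ (p - 1) with hrdef
    have hr0 : 0 < r := Real.rpow_pos_of_pos (by norm_num) _
    have hr1 : r < 1 := Real.rpow_lt_one_of_one_lt_of_neg (by norm_num) (by linarith)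
    set C : ℝ := 1 + 2 ^ (4*p) * (1 - r)⁻¹ with hCdef
    have hCpos : 0 < C := by
      have h1 : (0:ℝ) < 2 ^ (4*p) := Real.rpow_pos_of_pos (by norm_num) _
      have h2 : (0:ℝ) < (1 - r)⁻¹ := by
        apply inv_pos.2; linarith
      rw [hCdef]; positivity
    have hεbound : ∀ ε : ℝ, 0 < ε → ε < 1 → ∀ᶠ n : ℕ in atTop,
        (n : ℝ) * ∫ y in Set.Ico (0:ℝ) ε, y ∂(Measure.map (fun x => a n * x) μ)
          ≤ C * ε ^ (1 - p) := by
      intro ε hε hε1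
      have hεδ : (0:ℝ) < ε ^ (1 - p) / (8 * t₀) := by positivity
      have hcast : Tendsto (fun n : ℕ => (n:ℝ)) atTop atTop := tendsto_natCast_atTop_atTop
      filter_upwards [hcast.eventually (eventually_gt_atTop t₁),
        hcast.eventually (eventually_gt_atTop 0),
        hb_tendsto.eventually (eventually_ge_atTop (max t₀ (8*t₀/ε))),
        hnb.eventually (eventually_lt_nhds hεδ)] with n h1 h2 h3 h4
      set b : ℝ := Vinv (n:ℝ) with hbdef
      have hbt₀ : t₀ ≤ b := le_trans (le_max_left _ _) h3
      have hb8 : 8*t₀/ε ≤ b := le_trans (le_max_right _ _) h3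
      have hb0 : 0 < b := lt_of_lt_of_le ht₀0 hbt₀
      set T : ℝ := ε * b with hTdef
      have hT0 : 0 < T := by positivity
      have hT8 : 8*t₀ ≤ T := by
        rw [hTdef]
        rw [div_le_iff₀ hε] at hb8
        linarith [hb8]
      have hTb : T ≤ b := by
        rw [hTdef]
        nlinarith
      have ha_n : a (n:ℝ) = b⁻¹ := by rw [ha, one_div]
      -- rewrite the integral
      have hfun : (fun x : ℝ => a (n:ℝ) * x) = fun x => b⁻¹ * x := by
        funext x; rw [ha_n]
      have hpre : (fun x : ℝ => b⁻¹ * x) ⁻¹' (Ico 0 ε) = Ico 0 T := by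
        ext x
        simp only [mem_preimage, mem_Ico, inv_mul_eq_div, div_lt_iff₀ hb0, le_div_iff₀ hb0,
          zero_mul, hTdef]
      have hbinv : b⁻¹ ≠ 0 := by positivity
      have hemb : MeasurableEmbedding (fun x : ℝ => b⁻¹ * x) :=
        measurableEmbedding_mulLeft₀ hbinv
      have hmap : ∫ y in Set.Ico (0:ℝ) ε, y ∂(Measure.map (fun x => a (n:ℝ) * x) μ)
          = b⁻¹ * ∫ x in Set.Ico (0:ℝ) T, x ∂μ := by
        rw [hfun, hemb.setIntegral_map (fun y => y) (Ico 0 ε), hpre, integral_const_mul]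
      -- dyadic decomposition
      set K : ℕ := ⌈Real.logb 2 (T/(8*t₀))⌉₊ with hKdef
      have hT81 : (1:ℝ) ≤ T/(8*t₀) := by
        rw [le_div_iff₀ (by linarith : (0:ℝ) < 8*t₀)]
        linarith
      have hlog0 : 0 ≤ Real.logb 2 (T/(8*t₀)) := Real.logb_nonneg (by norm_num) hT81
      have hT80 : (0:ℝ) < T/(8*t₀) := by positivity
      have hK1 : T/(8*t₀) ≤ 2 ^ K := by
        calc T/(8*t₀) = (2:ℝ) ^ (Real.logb 2 (T/(8*t₀))) :=
              (Real.rpow_logb (by norm_num) (by norm_num) hT80).symm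
          _ ≤ (2:ℝ) ^ (K:ℝ) :=
              Real.rpow_le_rpow_of_exponent_le (by norm_num) (Nat.le_ceil _)
          _ = 2 ^ K := by rw [Real.rpow_natCast]
      have hK2 : (2:ℝ) ^ K ≤ T/(4*t₀) := by
        have h5 : (K:ℝ) ≤ Real.logb 2 (T/(8*t₀)) + 1 := (Nat.ceil_lt_add_one hlog0).le
        calc (2:ℝ) ^ K = (2:ℝ) ^ (K:ℝ) := by rw [Real.rpow_natCast]
          _ ≤ (2:ℝ) ^ (Real.logb 2 (T/(8*t₀)) + 1) :=
              Real.rpow_le_rpow_of_exponent_le (by norm_num) h5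
          _ = T/(4*t₀) := by
              rw [Real.rpow_add (by norm_num), Real.rpow_logb (by norm_num) (by norm_num) hT80,
                Real.rpow_one]
              field_simp
              ring
      have h2K0 : (0:ℝ) < 2 ^ K := by positivity
      have hTK_le : T / 2 ^ K ≤ 8*t₀ := by
        rw [div_le_iff₀ h2K0]
        calc T ≤ (8*t₀) * (T/(8*t₀)) := by field_simp; exact le_rfl
          _ ≤ (8*t₀) * 2 ^ K := by
              apply mul_le_mul_of_nonneg_left hK1 (by linarith)
          _ = 8*t₀ * 2 ^ K := rfl
      have hTK_ge : 4*t₀ ≤ T / 2 ^ K := by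
        rw [le_div_iff₀ h2K0]
        calc 4*t₀ * 2 ^ K ≤ 4*t₀ * (T/(4*t₀)) := by
              apply mul_le_mul_of_nonneg_left hK2 (by linarith)
          _ = T := by field_simp
      have hdy := dyadic μ hT0 K
      -- leftover bound
      have hlf : ∫ x in Set.Ico (0:ℝ) (T / 2 ^ K), x ∂μ ≤ 8*t₀ := by
        have hμ1 : (μ (Ico (0:ℝ) (T / 2 ^ K))).toReal ≤ 1 := by
          have := ENNReal.toReal_mono (measure_ne_top μ univ)
            (measure_mono (subset_univ (Ico (0:ℝ) (T / 2 ^ K))))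
          simpa using this
        calc ∫ x in Set.Ico (0:ℝ) (T / 2 ^ K), x ∂μ
            ≤ (T / 2 ^ K) * (μ (Ico (0:ℝ) (T / 2 ^ K))).toReal :=
              piece_le μ le_rfl (by positivity)
          _ ≤ (T / 2 ^ K) * 1 := by
              apply mul_le_mul_of_nonneg_left hμ1 (by positivity)
          _ ≤ 8*t₀ := by rw [mul_one]; exact hTK_le
      -- n * G(2b) ≤ 1
      have hG2b : G (2*b) < ((n:ℝ))⁻¹ := hGb _ h1 h2 hb0 _ (by linarith)
      have hnG2b : (n:ℝ) * G (2*b) ≤ 1 := by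
        calc (n:ℝ) * G (2*b) ≤ (n:ℝ) * (n:ℝ)⁻¹ :=
            mul_le_mul_of_nonneg_left hG2b.le h2.le
          _ ≤ 1 := by rw [mul_inv_cancel₀ h2.ne']
      -- per-term bound
      have hterm : ∀ k ∈ Finset.range K,
          ((n:ℝ)/b) * ((T / 2 ^ k) * G (T / 2 ^ (k + 2)))
            ≤ ε ^ (1-p) * 2 ^ (4*p) * r ^ k := by
        intro k hk
        rw [Finset.mem_range] at hk
        have h2k2 : (2:ℝ) ^ (k+2) ≤ 2 ^ (K+1) := by
          apply pow_le_pow_right₀ (by norm_num)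
          omega
        have hk_lb : t₀ ≤ T / 2 ^ (k + 2) := by
          have h6 : T / 2 ^ (K+1) ≤ T / 2 ^ (k+2) := by
            apply div_le_div_of_nonneg_left hT0.le (by positivity) h2k2
          have h7 : T / 2 ^ (K+1) = (T / 2 ^ K) / 2 := by
            rw [pow_succ]; ring
          rw [h7] at h6
          linarith
        have hk_ub : T / 2 ^ (k + 2) ≤ 2*b := by
          have h6 : T / 2 ^ (k+2) ≤ T := by
            apply div_le_self hT0.le (one_le_pow₀ (by norm_num))
          linarith
        have hpotk := hpot (T / 2 ^ (k+2)) (2*b) hk_lb (by linarith)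
        have heq1 : ((2*b) / (T / 2 ^ (k+2)) : ℝ) = 2 ^ (k+3) / ε := by
          rw [hTdef]
          field_simp
          ring
        rw [heq1] at hpotk
        have hstep1 : ((n:ℝ)/b) * ((T / 2 ^ k) * G (T / 2 ^ (k + 2)))
            = (ε * (n:ℝ) / 2 ^ k) * G (T / 2 ^ (k + 2)) := by
          rw [hTdef]
          field_simp
        have hG0 : 0 ≤ G (T / 2 ^ (k + 2)) := hGnn _
        have hstep2 : (ε * (n:ℝ) / 2 ^ k) * G (T / 2 ^ (k + 2))
            ≤ (ε / 2 ^ k) * (2 ^ p * (2 ^ (k+3) / ε) ^ p) * ((n:ℝ) * G (2*b)) := by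
          calc (ε * (n:ℝ) / 2 ^ k) * G (T / 2 ^ (k + 2))
              ≤ (ε * (n:ℝ) / 2 ^ k) * (2 ^ p * (2 ^ (k+3) / ε) ^ p * G (2*b)) := by
                apply mul_le_mul_of_nonneg_left hpotk (by positivity)
            _ = (ε / 2 ^ k) * (2 ^ p * (2 ^ (k+3) / ε) ^ p) * ((n:ℝ) * G (2*b)) := by
                ring
        have hstep3 : (ε / 2 ^ k) * (2 ^ p * (2 ^ (k+3) / ε) ^ p) * ((n:ℝ) * G (2*b))
            ≤ (ε / 2 ^ k) * (2 ^ p * (2 ^ (k+3) / ε) ^ p) := by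
          have hnn : (0:ℝ) ≤ (ε / 2 ^ k) * (2 ^ p * (2 ^ (k+3) / ε) ^ p) := by positivity
          calc (ε / 2 ^ k) * (2 ^ p * (2 ^ (k+3) / ε) ^ p) * ((n:ℝ) * G (2*b))
              ≤ (ε / 2 ^ k) * (2 ^ p * (2 ^ (k+3) / ε) ^ p) * 1 :=
                mul_le_mul_of_nonneg_left hnG2b hnn
            _ = (ε / 2 ^ k) * (2 ^ p * (2 ^ (k+3) / ε) ^ p) := mul_one _
        have hstep4 : (ε / 2 ^ k) * (2 ^ p * (2 ^ (k+3) / ε) ^ p)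
            = ε ^ (1-p) * 2 ^ (4*p) * r ^ k := by
          have e1 : ((2:ℝ) ^ (k+3) / ε) ^ p = ((2:ℝ) ^ (k+3)) ^ p / ε ^ p :=
            Real.div_rpow (by positivity) hε.le p
          have e2 : ((2:ℝ) ^ (k+3)) ^ p = (2:ℝ) ^ (((k:ℝ)+3) * p) := by
            rw [← Real.rpow_natCast 2 (k+3), ← Real.rpow_mul (by norm_num)]
            push_cast
            ring_nf
          have e3 : (r:ℝ) ^ k = (2:ℝ) ^ ((p-1) * (k:ℝ)) := by
            rw [hrdef, ← Real.rpow_natCast ((2:ℝ)^(p-1)) k, ← Real.rpow_mul (by norm_num)]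
          have e5 : ε ^ (1-p) = ε * (ε ^ p)⁻¹ := by
            rw [show (1-p : ℝ) = 1 + (-p) by ring, Real.rpow_add hε, Real.rpow_one,
              Real.rpow_neg hε.le]
          have hexp : (2:ℝ) ^ p * (2:ℝ) ^ (((k:ℝ)+3) * p)
              = (2:ℝ) ^ (4*p) * (2:ℝ) ^ ((p-1) * (k:ℝ)) * ((2:ℝ) ^ k) := by
            rw [← Real.rpow_natCast 2 k, ← Real.rpow_add (by norm_num),
              ← Real.rpow_add (by norm_num), ← Real.rpow_add (by norm_num)]
            congr 1
            ring
          rw [e1, e2, e3, e5]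
          have hεp : (0:ℝ) < ε ^ p := Real.rpow_pos_of_pos hε _
          field_simp
          linear_combination (norm := ring_nf) hexp
        calc ((n:ℝ)/b) * ((T / 2 ^ k) * G (T / 2 ^ (k + 2)))
            = (ε * (n:ℝ) / 2 ^ k) * G (T / 2 ^ (k + 2)) := hstep1
          _ ≤ (ε / 2 ^ k) * (2 ^ p * (2 ^ (k+3) / ε) ^ p) * ((n:ℝ) * G (2*b)) := hstep2
          _ ≤ (ε / 2 ^ k) * (2 ^ p * (2 ^ (k+3) / ε) ^ p) := hstep3
          _ = ε ^ (1-p) * 2 ^ (4*p) * r ^ k := hstep4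
      -- geometric sum bound
      have hgeom : ∑ k ∈ Finset.range K, r ^ k ≤ (1 - r)⁻¹ := by
        have hs : Summable (fun k : ℕ => r ^ k) := summable_geometric_of_lt_one hr0.le hr1
        calc ∑ k ∈ Finset.range K, r ^ k ≤ ∑' k : ℕ, r ^ k :=
              hs.sum_le_tsum _ (fun k _ => by positivity)
          _ = (1 - r)⁻¹ := tsum_geometric_of_lt_one hr0.le hr1
      -- assembly
      have hnb0 : 0 ≤ (n:ℝ)/b := by positivity
      have hfinal : ((n:ℝ)/b) * ∫ x in Set.Ico (0:ℝ) T, x ∂μ ≤ C * ε ^ (1-p) := by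
        have hA : ((n:ℝ)/b) * ∫ x in Set.Ico (0:ℝ) T, x ∂μ
            ≤ ((n:ℝ)/b) * ((∫ x in Ico (0:ℝ) (T / 2 ^ K), x ∂μ)
              + ∑ k ∈ Finset.range K, (T / 2 ^ k) * (μ (Ioi (T / 2 ^ (k + 2)))).toReal) :=
          mul_le_mul_of_nonneg_left hdy hnb0
        have hB : ((n:ℝ)/b) * ((∫ x in Ico (0:ℝ) (T / 2 ^ K), x ∂μ)
              + ∑ k ∈ Finset.range K, (T / 2 ^ k) * (μ (Ioi (T / 2 ^ (k + 2)))).toReal)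
            = ((n:ℝ)/b) * (∫ x in Ico (0:ℝ) (T / 2 ^ K), x ∂μ)
              + ∑ k ∈ Finset.range K, ((n:ℝ)/b) * ((T / 2 ^ k) * G (T / 2 ^ (k + 2))) := by
          rw [mul_add, Finset.mul_sum]
        have hC1 : ((n:ℝ)/b) * (∫ x in Ico (0:ℝ) (T / 2 ^ K), x ∂μ) ≤ ε ^ (1-p) := by
          have h8 : ((n:ℝ)/b) * (∫ x in Ico (0:ℝ) (T / 2 ^ K), x ∂μ) ≤ ((n:ℝ)/b) * (8*t₀) := by
            apply mul_le_mul_of_nonneg_left hlf hnb0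
          have h9 : ((n:ℝ)/b) * (8*t₀) ≤ ε ^ (1-p) := by
            rw [lt_div_iff₀ (by linarith : (0:ℝ) < 8*t₀)] at h4
            linarith [h4]
          linarith
        have hC2 : ∑ k ∈ Finset.range K, ((n:ℝ)/b) * ((T / 2 ^ k) * G (T / 2 ^ (k + 2)))
            ≤ 2 ^ (4*p) * (1 - r)⁻¹ * ε ^ (1-p) := by
          calc ∑ k ∈ Finset.range K, ((n:ℝ)/b) * ((T / 2 ^ k) * G (T / 2 ^ (k + 2)))
              ≤ ∑ k ∈ Finset.range K, ε ^ (1-p) * 2 ^ (4*p) * r ^ k :=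
                Finset.sum_le_sum hterm
            _ = ε ^ (1-p) * 2 ^ (4*p) * ∑ k ∈ Finset.range K, r ^ k := by
                rw [Finset.mul_sum]
            _ ≤ ε ^ (1-p) * 2 ^ (4*p) * (1 - r)⁻¹ := by
                apply mul_le_mul_of_nonneg_left hgeom (by positivity)
            _ = 2 ^ (4*p) * (1 - r)⁻¹ * ε ^ (1-p) := by ring
        calc ((n:ℝ)/b) * ∫ x in Set.Ico (0:ℝ) T, x ∂μ
            ≤ ((n:ℝ)/b) * (∫ x in Ico (0:ℝ) (T / 2 ^ K), x ∂μ)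
              + ∑ k ∈ Finset.range K, ((n:ℝ)/b) * ((T / 2 ^ k) * G (T / 2 ^ (k + 2))) := by
              rw [← hB]; exact hA
          _ ≤ ε ^ (1-p) + 2 ^ (4*p) * (1 - r)⁻¹ * ε ^ (1-p) := add_le_add hC1 hC2
          _ = C * ε ^ (1-p) := by rw [hCdef]; ring
      have hcastn : ((n:ℕ):ℝ) = (n:ℝ) := rfl
      calc (n : ℝ) * ∫ y in Set.Ico (0:ℝ) ε, y ∂(Measure.map (fun x => a n * x) μ)
          = (n:ℝ) * (b⁻¹ * ∫ x in Set.Ico (0:ℝ) T, x ∂μ) := by rw [hmap]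
        _ = ((n:ℝ)/b) * ∫ x in Set.Ico (0:ℝ) T, x ∂μ := by ring
        _ ≤ C * ε ^ (1-p) := hfinal
    -- conclude by squeeze
    have hCε : Tendsto (fun ε : ℝ => C * ε ^ (1-p)) (nhdsWithin 0 (Set.Ioi 0)) (𝓝 0) := by
      have hc1 : ContinuousAt (fun x : ℝ => x ^ (1-p)) 0 :=
        Real.continuousAt_rpow_const 0 (1-p) (Or.inr hδ0.le)
      have hc2 : Tendsto (fun x : ℝ => x ^ (1-p)) (nhdsWithin 0 (Set.Ioi 0))
          (𝓝 ((0:ℝ) ^ (1-p))) := hc1.tendsto.mono_left nhdsWithin_le_nhds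
      rw [Real.zero_rpow hδ0.ne'] at hc2
      have := hc2.const_mul C
      simpa using this
    have hIoo : Set.Ioo (0:ℝ) 1 ∈ nhdsWithin (0:ℝ) (Set.Ioi 0) :=
      Ioo_mem_nhdsGT_of_mem (by constructor <;> norm_num)
    apply tendsto_of_tendsto_of_tendsto_of_le_of_le' tendsto_const_nhds hCε
    · filter_upwards [hIoo] with ε hε
      refine le_limsup_of_frequently_le (Frequently.of_forall (fun n => ?_))
        ⟨C * ε ^ (1-p), eventually_map.2 (hεbound ε hε.1 hε.2)⟩
      exact mul_nonneg (Nat.cast_nonneg _) (hnonneg _ _)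
    · filter_upwards [hIoo] with ε hε
      refine limsup_le_of_le (isCoboundedUnder_le_of_le atTop (x := 0) (fun n => ?_))
        (hεbound ε hε.1 hε.2)
      exact mul_nonneg (Nat.cast_nonneg _) (hnonneg _ _)
end

section
/- Let (X_n) be random variables on ℤ_+ and (γ_n) a deterministic sequence in [0,1] with γ_n → 0. If γ_n X_n converges in distribution to a random variable X, then γ_n ∘ X_n converges in distribution to N_X, where (N_t) is a rate-1 Poisson process independent of X and γ ∘ Y = Σ_{i=1}^Y ε_i with ε_i iid Bernoulli(γ) independent of Y. -/
open MeasureTheory Real Set Filter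

/-- The probability mass function of the thinned random variable `γ ∘ Y`, where
`γ ∘ Y = Σ_{i=1}^Y ε_i` with `ε_i` iid Bernoulli(γ) independent of `Y`:
`P(γ ∘ Y = k) = E[ C(Y,k) γ^k (1-γ)^{Y-k} ]`. -/
noncomputable def thinPMF {Ω : Type*} [MeasurableSpace Ω] (P : MeasureTheory.Measure Ω)
    (Y : Ω → ℕ) (γ : ℝ) (k : ℕ) : ℝ :=
  ∫ ω, ((Y ω).choose k : ℝ) * γ ^ k * (1 - γ) ^ (Y ω - k) ∂P

/-- The probability mass function of `N_X`, where `N` is a rate-1 Poisson process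
independent of `X`, and `X` has law `μ`: `P(N_X = k) = E[e^{-X} X^k / k!]`. -/
noncomputable def mixedPoissonPMF (μ : MeasureTheory.Measure ℝ) (k : ℕ) : ℝ :=
  ∫ x, Real.exp (-x) * x ^ k / (Nat.factorial k) ∂μ

open Finset Topology


lemma natlemma (k m : ℕ) (h : k ≤ m) : m^k ≤ m.descFactorial k + k^2 * m^(k-1) := by
  induction k with
  | zero => simp
  | succ k ih =>
    have hk : k ≤ m := Nat.le_of_succ_le h
    have ih' := ih hk
    have hdesc : m.descFactorial k ≤ m ^ k := Nat.descFactorial_le_pow m k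
    have h1 : m ^ (k+1) ≤ m * m.descFactorial k + k^2 * m^k := by
      calc m ^ (k+1) = m * m ^ k := by ring
        _ ≤ m * (m.descFactorial k + k^2 * m^(k-1)) := Nat.mul_le_mul_left m ih'
        _ = m * m.descFactorial k + k^2 * (m * m^(k-1)) := by ring
        _ ≤ m * m.descFactorial k + k^2 * m^k := by
            rcases Nat.eq_zero_or_pos k with rfl | hk0
            · simp
            · have : m * m^(k-1) = m ^ k := by
                rw [← pow_succ']
                congr 1
                exact Nat.succ_pred_eq_of_pos hk0
              rw [this]
    have h2 : m * m.descFactorial k = m.descFactorial (k+1) + k * m.descFactorial k := by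
      rw [Nat.descFactorial_succ]
      have : m - k + k = m := Nat.sub_add_cancel hk
      calc m * m.descFactorial k = (m - k + k) * m.descFactorial k := by rw [this]
        _ = (m-k) * m.descFactorial k + k * m.descFactorial k := by ring
      
    calc m ^ (k+1) ≤ m * m.descFactorial k + k^2 * m^k := h1
      _ = m.descFactorial (k+1) + k * m.descFactorial k + k^2 * m^k := by rw [h2]
      _ ≤ m.descFactorial (k+1) + k * m^k + k^2 * m^k := by gcongr
      _ ≤ m.descFactorial (k+1) + (k+1)^2 * m^(k+1-1) := by
          simp only [Nat.add_sub_cancel]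
          have : k * m^k + k^2 * m^k = (k^2 + k) * m ^ k := by ring
          rw [add_assoc, this]
          gcongr
          nlinarith

lemma pow_div_fact_le_exp (x : ℝ) (hx : 0 ≤ x) (j : ℕ) :
    x ^ j / j.factorial ≤ Real.exp x := by
  have hs : HasSum (fun n : ℕ => x ^ n / n.factorial) (Real.exp x) := by
    rw [Real.exp_eq_exp_ℝ]
    exact NormedSpace.expSeries_div_hasSum_exp x
  exact le_hasSum hs j (fun i _ => by positivity)

lemma pow_mul_exp_neg_le (x : ℝ) (hx : 0 ≤ x) (j : ℕ) :
    x ^ j * Real.exp (-x) ≤ j.factorial := by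
  have h := pow_div_fact_le_exp x hx j
  have hfac : (0:ℝ) < j.factorial := by positivity
  rw [Real.exp_neg]
  rw [div_le_iff₀ hfac] at h
  rw [mul_inv_le_iff₀ (Real.exp_pos x)]
  linarith [h]

lemma binom_term_nonneg (m k : ℕ) {γ : ℝ} (h0 : 0 ≤ γ) (h1 : γ ≤ 1) :
    0 ≤ (m.choose k : ℝ) * γ ^ k * (1 - γ) ^ (m - k) := by
  have : (0:ℝ) ≤ 1 - γ := by linarith
  positivity

lemma binom_term_le_one (m k : ℕ) {γ : ℝ} (h0 : 0 ≤ γ) (h1 : γ ≤ 1) :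
    (m.choose k : ℝ) * γ ^ k * (1 - γ) ^ (m - k) ≤ 1 := by
  have h1γ : (0:ℝ) ≤ 1 - γ := by linarith
  rcases le_or_gt k m with hkm | hkm
  · have hsum : ∑ j ∈ Finset.range (m+1), γ ^ j * (1-γ) ^ (m - j) * (m.choose j : ℝ) = 1 := by
      rw [← add_pow]
      norm_num
    calc (m.choose k : ℝ) * γ ^ k * (1 - γ) ^ (m - k)
        = γ ^ k * (1-γ) ^ (m - k) * (m.choose k : ℝ) := by ring
      _ ≤ ∑ j ∈ Finset.range (m+1), γ ^ j * (1-γ) ^ (m - j) * (m.choose j : ℝ) := by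
          apply Finset.single_le_sum (f := fun j => γ ^ j * (1-γ) ^ (m - j) * (m.choose j : ℝ))
          · intro i _; positivity
          · simp [Nat.lt_succ_iff, hkm]
      _ = 1 := hsum
  · rw [Nat.choose_eq_zero_of_lt hkm]
    norm_num

/-- the constant in the key uniform bound -/
noncomputable def Cst (k : ℕ) : ℝ :=
  (k:ℝ)^k + ((k:ℝ)^2 + k) * Real.exp k + 2*(k+1) + 4

lemma Cst_nonneg (k : ℕ) : 0 ≤ Cst k := by
  unfold Cst
  positivity

lemma exp_neg_le_one_sub {γ : ℝ} (h0 : 0 ≤ γ) (hh : γ ≤ 1/2) :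
    Real.exp (-(γ * (1 + 2*γ))) ≤ 1 - γ := by
  have hx := Real.add_one_le_exp (γ * (1 + 2*γ))
  have h1γ : (0:ℝ) < 1 - γ := by linarith
  rw [Real.exp_neg, inv_le_comm₀ (Real.exp_pos _) h1γ]
  have key2 : (1-γ)⁻¹ ≤ 1 + γ*(1+2*γ) := by
    rw [inv_eq_one_div, div_le_iff₀ h1γ]
    nlinarith [mul_nonneg (mul_nonneg h0 h0) (by linarith : (0:ℝ) ≤ 1 - 2*γ)]
  linarith

set_option maxHeartbeats 2000000 in
lemma key (k m : ℕ) {γ : ℝ} (h0 : 0 ≤ γ) (h1 : γ ≤ 1) :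
    |(m.choose k : ℝ) * γ ^ k * (1 - γ) ^ (m - k)
      - Real.exp (-(γ * m)) * (γ * m) ^ k / k.factorial| ≤ Cst k * γ := by
  have hL0 : (0:ℝ) ≤ γ * m := by positivity
  have hfac : (0:ℝ) < (k.factorial : ℝ) := by positivity
  have hfac1 : (1:ℝ) ≤ (k.factorial : ℝ) := by exact_mod_cast k.factorial_pos
  have hg0 : (0:ℝ) ≤ Real.exp (-(γ * m)) * (γ * m) ^ k / k.factorial := by positivity
  have hg1 : Real.exp (-(γ * m)) * (γ * m) ^ k / k.factorial ≤ 1 := by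
    rw [div_le_one hfac]
    calc Real.exp (-(γ * m)) * (γ * m) ^ k = (γ * m) ^ k * Real.exp (-(γ * m)) := by ring
      _ ≤ k.factorial := pow_mul_exp_neg_le _ hL0 k
  have hCst4 : (4:ℝ) ≤ Cst k := by
    unfold Cst
    have a1 : (0:ℝ) ≤ (k:ℝ)^k := by positivity
    have a2 : (0:ℝ) ≤ ((k:ℝ)^2 + k) * Real.exp k := by positivity
    have a3 : (0:ℝ) ≤ 2*((k:ℝ)+1) := by positivity
    linarith
  rcases le_or_gt γ (1/2) with hhalf | hhalf
  swap
  · -- γ > 1/2 : crude bound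
    have hb0 := binom_term_nonneg m k h0 h1
    have hb1 := binom_term_le_one m k h0 h1
    have h2 : |(m.choose k : ℝ) * γ ^ k * (1 - γ) ^ (m - k)
        - Real.exp (-(γ * m)) * (γ * m) ^ k / k.factorial| ≤ 2 := by
      rw [abs_le]; constructor <;> linarith
    have : (2:ℝ) ≤ Cst k * γ := by nlinarith
    linarith
  · rcases lt_or_ge m k with hmk | hkm
    · -- m < k : binomial term is 0
      have hk1 : 1 ≤ k := Nat.one_le_iff_ne_zero.2 (by rintro rfl; omega)
      rw [Nat.choose_eq_zero_of_lt hmk]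
      simp only [Nat.cast_zero, zero_mul, zero_sub, abs_neg]
      rw [abs_of_nonneg hg0]
      have hgm : γ * m ≤ γ * k := by
        have : (m:ℝ) ≤ k := by exact_mod_cast hmk.le
        nlinarith
      have h3 : Real.exp (-(γ * m)) * (γ * m) ^ k / k.factorial ≤ (γ * k) ^ k := by
        have e1 : Real.exp (-(γ * m)) ≤ 1 := Real.exp_le_one_iff.2 (by linarith)
        calc Real.exp (-(γ * m)) * (γ * m) ^ k / k.factorial
            ≤ Real.exp (-(γ * m)) * (γ * m) ^ k := by
              apply div_le_self (by positivity) hfac1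
          _ ≤ 1 * (γ * m) ^ k := by gcongr
          _ = (γ * m) ^ k := one_mul _
          _ ≤ (γ * k) ^ k := by gcongr
      have h4 : (γ * k) ^ k ≤ γ * (k:ℝ)^k := by
        rw [mul_pow]
        have : γ ^ k ≤ γ := pow_le_of_le_one h0 h1 (by omega)
        nlinarith [pow_nonneg (by positivity : (0:ℝ) ≤ (k:ℝ)) k, pow_nonneg h0 k]
      have h5 : γ * (k:ℝ)^k ≤ Cst k * γ := by
        unfold Cst
        have hnn : 0 ≤ γ * (((k:ℝ)^2+(k:ℝ))*Real.exp (k:ℝ) + 2*((k:ℝ)+1) + 4) := by positivity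
        nlinarith [hnn]
      linarith
    · -- main case : k ≤ m, γ ≤ 1/2
      set lam := γ * m with hlam
      set D := (m.choose k : ℝ) * γ ^ k with hD
      set T := lam ^ k / k.factorial with hT
      set E := Real.exp (-lam) with hE
      set Q := (1 - γ) ^ (m - k) with hQ
      have h1γ : (0:ℝ) ≤ 1 - γ := by linarith
      have hE0 : 0 < E := Real.exp_pos _
      have hQ0 : 0 ≤ Q := pow_nonneg h1γ _
      have hQ1 : Q ≤ 1 := pow_le_one₀ h1γ (by linarith)
      have hT0 : 0 ≤ T := by positivity
      clear_value lam D T E Q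
      have hdesc : (m.descFactorial k : ℝ) = (k.factorial : ℝ) * (m.choose k : ℝ) := by
        exact_mod_cast congrArg Nat.cast (Nat.descFactorial_eq_factorial_mul_choose m k)
      have hchoose : (m.choose k : ℝ) = (m.descFactorial k : ℝ) / k.factorial := by
        rw [hdesc]; field_simp
      have hnat : ((m:ℝ))^k ≤ (m.descFactorial k : ℝ) + (k:ℝ)^2 * (m:ℝ)^(k-1) := by
        exact_mod_cast Nat.cast_le.2 (natlemma k m hkm)
      have hdesc_le : (m.descFactorial k : ℝ) ≤ (m:ℝ)^k := by
        exact_mod_cast Nat.cast_le.2 (Nat.descFactorial_le_pow m k)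
      have hDT : D ≤ T := by
        rw [hD, hT, hchoose, hlam, mul_pow, div_mul_eq_mul_div, div_le_div_iff₀ hfac hfac]
        have hγk : (0:ℝ) ≤ γ ^ k := pow_nonneg h0 k
        nlinarith [mul_le_mul_of_nonneg_right (mul_le_mul_of_nonneg_right hdesc_le hγk) hfac.le]
      have hTD : T - D ≤ (k:ℝ)^2 * γ ^ k * (m:ℝ)^(k-1) / k.factorial := by
        have e1 : T - D = (lam ^ k - (m.descFactorial k : ℝ) * γ ^ k) / k.factorial := by
          rw [hT, hD, hchoose]; ring
        rw [e1, div_le_div_iff₀ hfac hfac, hlam, mul_pow]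
        have hγk : (0:ℝ) ≤ γ ^ k := pow_nonneg h0 k
        have hh1 : γ^k * ((m:ℝ))^k * (k.factorial:ℝ)
            ≤ (γ^k * ((m.descFactorial k:ℝ) + (k:ℝ)^2*(m:ℝ)^(k-1))) * k.factorial :=
          mul_le_mul_of_nonneg_right (mul_le_mul_of_nonneg_left hnat hγk) hfac.le
        nlinarith [hh1]
      -- bound A
      have hQle : Q ≤ E * Real.exp k := by
        have h1' : Q ≤ Real.exp (-γ) ^ (m - k) := by
          rw [hQ]
          apply pow_le_pow_left₀ h1γ
          linarith [Real.add_one_le_exp (-γ)]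
        have h2' : Real.exp (-γ) ^ (m - k) = Real.exp (-(γ * ((m - k : ℕ):ℝ))) := by
          rw [← Real.exp_nat_mul]; congr 1; ring
        have h3' : ((m - k : ℕ) : ℝ) = (m:ℝ) - k := Nat.cast_sub hkm
        have h4' : Real.exp (-(γ * ((m:ℝ) - k))) = E * Real.exp (γ * k) := by
          rw [hE, ← Real.exp_add]; congr 1; rw [hlam]; ring
        have h5' : Real.exp (γ * k) ≤ Real.exp k := by
          apply Real.exp_le_exp.2
          nlinarith [Nat.cast_nonneg (α := ℝ) k]
        calc Q ≤ Real.exp (-γ) ^ (m - k) := h1'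
          _ = Real.exp (-(γ * ((m - k:ℕ):ℝ))) := h2'
          _ = E * Real.exp (γ * k) := by rw [h3', h4']
          _ ≤ E * Real.exp k := by nlinarith
      have hA : (T - D) * Q ≤ γ * (k:ℝ)^2 * Real.exp k := by
        rcases Nat.eq_zero_or_pos k with rfl | hk0
        · have hTD0 : T = D := by simp [hT, hD]
          rw [hTD0, sub_self, zero_mul]
          norm_num
        · have hsplit : γ ^ k * (m:ℝ)^(k-1) = γ * lam^(k-1) := by
            rw [hlam, mul_pow]
            have : γ ^ k = γ * γ ^ (k-1) := by
              rw [← pow_succ']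
              congr 1
              omega
            rw [this]; ring
          have hlamE : lam^(k-1) * E ≤ k.factorial := by
            calc lam^(k-1) * E ≤ ((k-1).factorial : ℝ) := by
                  rw [hE]; exact pow_mul_exp_neg_le lam hL0 (k-1)
              _ ≤ (k.factorial : ℝ) := by
                  exact_mod_cast Nat.cast_le.2 (Nat.factorial_le (Nat.sub_le k 1))
          calc (T - D) * Q ≤ ((k:ℝ)^2 * γ ^ k * (m:ℝ)^(k-1) / k.factorial) * (E * Real.exp k) := by
                apply mul_le_mul hTD hQle hQ0
                positivity
            _ = (k:ℝ)^2 * (γ ^ k * (m:ℝ)^(k-1)) / k.factorial * (E * Real.exp k) := by ring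
            _ = (k:ℝ)^2 * (γ * lam^(k-1)) / k.factorial * (E * Real.exp k) := by rw [hsplit]
            _ = γ * (k:ℝ)^2 * Real.exp k * ((lam^(k-1) * E) / k.factorial) := by ring
            _ ≤ γ * (k:ℝ)^2 * Real.exp k * 1 := by
                have hle1 : (lam^(k-1) * E) / k.factorial ≤ 1 := by
                  rw [div_le_one hfac]; exact hlamE
                have hnn : 0 ≤ γ * (k:ℝ)^2 * Real.exp k :=
                  mul_nonneg (mul_nonneg h0 (by positivity)) (Real.exp_pos _).le
                exact mul_le_mul_of_nonneg_left hle1 hnn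
            _ = γ * (k:ℝ)^2 * Real.exp k := by ring
      -- bound B
      have hup : Q - E ≤ E * (Real.exp (γ * k) - 1) := by
        have h2' : Real.exp (-γ) ^ (m - k) = Real.exp (-(γ * ((m - k : ℕ):ℝ))) := by
          rw [← Real.exp_nat_mul]; congr 1; ring
        have h3' : ((m - k : ℕ) : ℝ) = (m:ℝ) - k := Nat.cast_sub hkm
        have h4' : Real.exp (-(γ * ((m:ℝ) - k))) = E * Real.exp (γ * k) := by
          rw [hE, ← Real.exp_add]; congr 1; rw [hlam]; ring
        have h1' : Q ≤ E * Real.exp (γ * k) := by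
          calc Q ≤ Real.exp (-γ) ^ (m - k) := by
                rw [hQ]
                apply pow_le_pow_left₀ h1γ
                linarith [Real.add_one_le_exp (-γ)]
            _ = E * Real.exp (γ * k) := by rw [h2', h3', h4']
        nlinarith [h1']
      have hlow : E - Q ≤ E * (2 * γ * lam) := by
        have hbase : Real.exp (-(γ * (1 + 2*γ))) ≤ 1 - γ := exp_neg_le_one_sub h0 hhalf
        have h1' : Real.exp (-(γ * (1 + 2*γ))) ^ m ≤ (1 - γ) ^ m :=
          pow_le_pow_left₀ (Real.exp_pos _).le hbase m
        have h2' : (1 - γ) ^ m ≤ Q := by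
          rw [hQ]
          exact pow_le_pow_of_le_one h1γ (by linarith) (Nat.sub_le m k)
        have h3' : Real.exp (-(γ * (1 + 2*γ))) ^ m = E * Real.exp (-(2 * γ * lam)) := by
          rw [← Real.exp_nat_mul, hE, ← Real.exp_add, hlam]
          congr 1; ring
        have h4' : E * (1 - 2 * γ * lam) ≤ E * Real.exp (-(2 * γ * lam)) := by
          have := Real.add_one_le_exp (-(2 * γ * lam))
          nlinarith [hE0]
        nlinarith [hE0]
      have habs : |Q - E| ≤ E * (Real.exp (γ * k) - 1) + E * (2 * γ * lam) := by
        rw [abs_le]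
        have e1 : 0 ≤ E * (Real.exp (γ * k) - 1) := by
          have : (1:ℝ) ≤ Real.exp (γ * k) := Real.one_le_exp (mul_nonneg h0 (Nat.cast_nonneg k))
          nlinarith
        have e2 : 0 ≤ E * (2 * γ * lam) :=
          mul_nonneg hE0.le (mul_nonneg (mul_nonneg (by norm_num) h0) hL0)
        constructor <;> nlinarith
      have hTE1 : T * E ≤ 1 := by
        rw [hT, hE, div_mul_eq_mul_div, div_le_one hfac]
        exact pow_mul_exp_neg_le lam hL0 k
      have hTElam : T * E * lam ≤ (k:ℝ) + 1 := by
        have h1' : lam ^ (k+1) * E ≤ ((k+1).factorial : ℝ) := by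
          rw [hE]; exact pow_mul_exp_neg_le lam hL0 (k+1)
        have h2' : ((k+1).factorial : ℝ) = ((k:ℝ)+1) * k.factorial := by
          rw [Nat.factorial_succ]; push_cast; ring
        rw [hT]
        rw [div_mul_eq_mul_div, div_mul_eq_mul_div, div_le_iff₀ hfac]
        calc lam ^ k * E * lam = lam ^ (k+1) * E := by ring
          _ ≤ ((k+1).factorial : ℝ) := h1'
          _ = ((k:ℝ)+1) * k.factorial := h2'
      have hexpk : Real.exp (γ * k) - 1 ≤ γ * k * Real.exp k := by
        have h1' : 1 - Real.exp (-(γ * k)) ≤ γ * k := by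
          linarith [Real.add_one_le_exp (-(γ * k))]
        have h2' : Real.exp (γ * k) * Real.exp (-(γ * k)) = 1 := by
          rw [← Real.exp_add]; norm_num
        have h3' : Real.exp (γ * k) ≤ Real.exp k := Real.exp_le_exp.2 (by nlinarith [Nat.cast_nonneg (α := ℝ) k])
        have p1 : Real.exp (γ*k) * (1 - Real.exp (-(γ*k))) ≤ Real.exp (γ*k) * (γ*k) :=
          mul_le_mul_of_nonneg_left h1' (Real.exp_pos _).le
        have p2 : Real.exp (γ*k) * (γ*k) ≤ Real.exp k * (γ*k) :=
          mul_le_mul_of_nonneg_right h3' (mul_nonneg h0 (Nat.cast_nonneg k))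
        nlinarith [p1, p2, h2']
      have hB : T * |Q - E| ≤ γ * (k:ℝ) * Real.exp k + 2 * γ * ((k:ℝ) + 1) := by
        calc T * |Q - E| ≤ T * (E * (Real.exp (γ * k) - 1) + E * (2 * γ * lam)) := by
              apply mul_le_mul_of_nonneg_left habs hT0
          _ = (T * E) * (Real.exp (γ * k) - 1) + 2 * γ * (T * E * lam) := by ring
          _ ≤ 1 * (γ * (k:ℝ) * Real.exp k) + 2 * γ * ((k:ℝ) + 1) := by
              have e1 : 0 ≤ Real.exp (γ * k) - 1 := by
                have : (1:ℝ) ≤ Real.exp (γ * k) := Real.one_le_exp (mul_nonneg h0 (Nat.cast_nonneg k))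
                linarith
              have e3 : 0 ≤ T * E := by positivity
              have e4 : (T * E) * (Real.exp (γ * k) - 1) ≤ 1 * (Real.exp (γ * k) - 1) := by
                apply mul_le_mul_of_nonneg_right hTE1 e1
              have e5 : (1:ℝ) * (Real.exp (γ * k) - 1) ≤ 1 * (γ * (k:ℝ) * Real.exp k) := by
                rw [one_mul, one_mul]; exact hexpk
              have e6 : 2 * γ * (T * E * lam) ≤ 2 * γ * ((k:ℝ) + 1) := by
                apply mul_le_mul_of_nonneg_left hTElam (by linarith)
              linarith
          _ = γ * (k:ℝ) * Real.exp k + 2 * γ * ((k:ℝ) + 1) := by ring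
      -- combine
      have hcomb : |D * Q - E * lam ^ k / k.factorial| ≤ (T - D) * Q + T * |Q - E| := by
        have e0 : E * lam ^ k / k.factorial = T * E := by rw [hT]; ring
        rw [e0]
        have e1 : D * Q - T * E = (D - T) * Q + T * (Q - E) := by ring
        rw [e1]
        calc |(D - T) * Q + T * (Q - E)| ≤ |(D - T) * Q| + |T * (Q - E)| := abs_add_le _ _
          _ = (T - D) * Q + T * |Q - E| := by
              rw [abs_mul, abs_mul, abs_of_nonneg hQ0, abs_of_nonneg hT0,
                abs_sub_comm, abs_of_nonneg (by linarith : 0 ≤ T - D)]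
      have hfinal : (T - D) * Q + T * |Q - E| ≤ Cst k * γ := by
        have := hA
        have := hB
        unfold Cst
        have hkk : (0:ℝ) ≤ (k:ℝ)^k := by positivity
        nlinarith [hkk]
      calc |D * Q - E * lam ^ k / k.factorial| ≤ (T - D) * Q + T * |Q - E| := hcomb
        _ ≤ Cst k * γ := hfinal

-- sum of binomial terms over any finset is ≤ 1
lemma finset_sum_binom_le_one (m : ℕ) {γ : ℝ} (h0 : 0 ≤ γ) (h1 : γ ≤ 1) (F : Finset ℕ) :
    ∑ k ∈ F, (m.choose k : ℝ) * γ ^ k * (1 - γ) ^ (m - k) ≤ 1 := by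
  have h1γ : (0:ℝ) ≤ 1 - γ := by linarith
  have hsub : F ⊆ F ∪ Finset.range (m+1) := Finset.subset_union_left
  have step1 : ∑ k ∈ F, (m.choose k : ℝ) * γ ^ k * (1 - γ) ^ (m - k)
      ≤ ∑ k ∈ F ∪ Finset.range (m+1), (m.choose k : ℝ) * γ ^ k * (1 - γ) ^ (m - k) := by
    apply Finset.sum_le_sum_of_subset_of_nonneg hsub
    intro i _ _
    exact binom_term_nonneg m i h0 h1
  have step2 : ∑ k ∈ F ∪ Finset.range (m+1), (m.choose k : ℝ) * γ ^ k * (1 - γ) ^ (m - k)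
      = ∑ k ∈ Finset.range (m+1), (m.choose k : ℝ) * γ ^ k * (1 - γ) ^ (m - k) := by
    symm
    apply Finset.sum_subset Finset.subset_union_right
    intro x _ hx
    have : m < x := by
      simp only [Finset.mem_range] at hx
      omega
    rw [Nat.choose_eq_zero_of_lt this]
    norm_num
  have step3 : ∑ k ∈ Finset.range (m+1), (m.choose k : ℝ) * γ ^ k * (1 - γ) ^ (m - k) = 1 := by
    calc ∑ k ∈ Finset.range (m+1), (m.choose k : ℝ) * γ ^ k * (1 - γ) ^ (m - k)
        = ∑ k ∈ Finset.range (m+1), γ ^ k * (1 - γ) ^ (m - k) * (m.choose k : ℝ) :=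
          Finset.sum_congr rfl (fun k _ => by ring)
      _ = (γ + (1-γ)) ^ m := (add_pow γ (1-γ) m).symm
      _ = 1 := by norm_num
  linarith

-- measurability / integrability of the thinning integrand
lemma thin_integrand_integrable {Ω : Type*} [MeasurableSpace Ω] (P : Measure Ω)
    [IsProbabilityMeasure P] {Y : Ω → ℕ} (hY : Measurable Y) {γ : ℝ}
    (h0 : 0 ≤ γ) (h1 : γ ≤ 1) (k : ℕ) :
    Integrable (fun ω => ((Y ω).choose k : ℝ) * γ ^ k * (1 - γ) ^ (Y ω - k)) P := by
  have hmeas : Measurable fun ω => ((Y ω).choose k : ℝ) * γ ^ k * (1 - γ) ^ (Y ω - k) := by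
    exact (measurable_from_top (f := fun m : ℕ => ((m.choose k : ℝ) * γ ^ k * (1 - γ) ^ (m - k)))).comp hY
  apply Integrable.mono' (integrable_const (1:ℝ)) hmeas.aestronglyMeasurable
  filter_upwards with ω
  rw [Real.norm_eq_abs, abs_of_nonneg (binom_term_nonneg _ _ h0 h1)]
  have := finset_sum_binom_le_one (Y ω) h0 h1 {k}
  simpa using this

lemma thinPMF_nonneg {Ω : Type*} [MeasurableSpace Ω] (P : Measure Ω)
    {Y : Ω → ℕ} {γ : ℝ} (h0 : 0 ≤ γ) (h1 : γ ≤ 1) (k : ℕ) :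
    0 ≤ thinPMF P Y γ k := by
  apply integral_nonneg
  intro ω
  exact binom_term_nonneg _ _ h0 h1

lemma thinPMF_sum_le_one {Ω : Type*} [MeasurableSpace Ω] (P : Measure Ω)
    [IsProbabilityMeasure P] {Y : Ω → ℕ} (hY : Measurable Y) {γ : ℝ}
    (h0 : 0 ≤ γ) (h1 : γ ≤ 1) (F : Finset ℕ) :
    ∑ k ∈ F, thinPMF P Y γ k ≤ 1 := by
  unfold thinPMF
  rw [← integral_finset_sum F (fun k _ => thin_integrand_integrable P hY h0 h1 k)]
  calc ∫ ω, ∑ k ∈ F, ((Y ω).choose k : ℝ) * γ ^ k * (1 - γ) ^ (Y ω - k) ∂P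
      ≤ ∫ _, (1:ℝ) ∂P := by
        apply integral_mono (integrable_finset_sum F (fun k _ => thin_integrand_integrable P hY h0 h1 k)) (integrable_const 1)
        intro ω
        exact finset_sum_binom_le_one (Y ω) h0 h1 F
    _ = 1 := by simp

lemma poisson_term_nonneg {x : ℝ} (hx : 0 ≤ x) (k : ℕ) :
    0 ≤ Real.exp (-x) * x ^ k / (Nat.factorial k) :=
  div_nonneg (mul_nonneg (Real.exp_pos _).le (pow_nonneg hx k)) (Nat.cast_nonneg _)

lemma poisson_term_le_one {x : ℝ} (hx : 0 ≤ x) (k : ℕ) :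
    Real.exp (-x) * x ^ k / (Nat.factorial k) ≤ 1 := by
  have h := pow_div_fact_le_exp x hx k
  have he : 0 < Real.exp (-x) := Real.exp_pos _
  have : Real.exp (-x) * (x ^ k / k.factorial) ≤ Real.exp (-x) * Real.exp x :=
    mul_le_mul_of_nonneg_left h he.le
  rw [← Real.exp_add] at this
  simp only [neg_add_cancel, Real.exp_zero] at this
  calc Real.exp (-x) * x ^ k / (Nat.factorial k)
      = Real.exp (-x) * (x ^ k / k.factorial) := by ring
    _ ≤ 1 := this

lemma poisson_hasSum (x : ℝ) :
    HasSum (fun k : ℕ => Real.exp (-x) * x ^ k / (Nat.factorial k)) 1 := by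
  have hs : HasSum (fun n : ℕ => x ^ n / n.factorial) (Real.exp x) := by
    rw [Real.exp_eq_exp_ℝ]
    exact NormedSpace.expSeries_div_hasSum_exp x
  have := hs.mul_left (Real.exp (-x))
  rw [← Real.exp_add] at this
  simp only [neg_add_cancel, Real.exp_zero] at this
  convert this using 2 with k
  · rfl
  ring

lemma finset_sum_poisson_le_one {x : ℝ} (hx : 0 ≤ x) (F : Finset ℕ) :
    ∑ k ∈ F, Real.exp (-x) * x ^ k / (Nat.factorial k) ≤ 1 :=
  sum_le_hasSum F (fun i _ => poisson_term_nonneg hx i) (poisson_hasSum x)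

section MixedPoisson

variable {μ : Measure ℝ} [IsProbabilityMeasure μ] (hμ : μ (Set.Iio 0) = 0)

lemma ae_nonneg_of_Iio (hμ : μ (Set.Iio 0) = 0) : ∀ᵐ x ∂μ, 0 ≤ x := by
  rw [ae_iff]
  convert hμ using 2
  ext x
  simp [Set.mem_Iio, not_le]

lemma poisson_integrand_integrable (hμ : μ (Set.Iio 0) = 0) (k : ℕ) :
    Integrable (fun x => Real.exp (-x) * x ^ k / (Nat.factorial k)) μ := by
  have hc : Continuous fun x : ℝ => Real.exp (-x) * x ^ k / (Nat.factorial k) := by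
    continuity
  apply Integrable.mono' (integrable_const (1:ℝ)) hc.aestronglyMeasurable
  filter_upwards [ae_nonneg_of_Iio hμ] with x hx
  rw [Real.norm_eq_abs, abs_of_nonneg (poisson_term_nonneg hx k)]
  exact poisson_term_le_one hx k

lemma mixedPoissonPMF_nonneg (hμ : μ (Set.Iio 0) = 0) (k : ℕ) :
    0 ≤ mixedPoissonPMF μ k := by
  apply integral_nonneg_of_ae
  filter_upwards [ae_nonneg_of_Iio hμ] with x hx
  exact poisson_term_nonneg hx k

lemma mixedPoissonPMF_sum_le_one (hμ : μ (Set.Iio 0) = 0) (F : Finset ℕ) :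
    ∑ k ∈ F, mixedPoissonPMF μ k ≤ 1 := by
  unfold mixedPoissonPMF
  rw [← integral_finset_sum F (fun k _ => poisson_integrand_integrable hμ k)]
  calc ∫ x, ∑ k ∈ F, Real.exp (-x) * x ^ k / (Nat.factorial k) ∂μ
      ≤ ∫ _, (1:ℝ) ∂μ := by
        apply integral_mono_ae (integrable_finset_sum F (fun k _ => poisson_integrand_integrable hμ k))
          (integrable_const 1)
        filter_upwards [ae_nonneg_of_Iio hμ] with x hx
        exact finset_sum_poisson_le_one hx F
    _ = 1 := by simp

lemma mixedPoissonPMF_summable (hμ : μ (Set.Iio 0) = 0) :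
    Summable (mixedPoissonPMF μ) :=
  summable_of_sum_le (fun k => mixedPoissonPMF_nonneg hμ k) (mixedPoissonPMF_sum_le_one hμ)

lemma mixedPoissonPMF_hasSum_one (hμ : μ (Set.Iio 0) = 0) :
    HasSum (mixedPoissonPMF μ) 1 := by
  rw [hasSum_iff_tendsto_nat_of_nonneg (fun k => mixedPoissonPMF_nonneg hμ k)]
  have heq : ∀ K : ℕ, ∑ k ∈ Finset.range K, mixedPoissonPMF μ k
      = ∫ x, (∑ k ∈ Finset.range K, Real.exp (-x) * x ^ k / (Nat.factorial k)) ∂μ := by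
    intro K
    exact (integral_finset_sum _ (fun k _ => poisson_integrand_integrable hμ k)).symm
  simp only [heq]
  have h1 : (1:ℝ) = ∫ _, (1:ℝ) ∂μ := by simp
  rw [h1]
  apply tendsto_integral_of_dominated_convergence (fun _ => (1:ℝ))
  · intro K
    exact (Continuous.aestronglyMeasurable (by continuity))
  · exact integrable_const 1
  · intro K
    filter_upwards [ae_nonneg_of_Iio hμ] with x hx
    rw [Real.norm_eq_abs, abs_of_nonneg (Finset.sum_nonneg (fun k _ => poisson_term_nonneg hx k))]
    exact finset_sum_poisson_le_one hx (Finset.range K)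
  · filter_upwards with x
    exact (poisson_hasSum x).tendsto_sum_nat

end MixedPoisson

/-- the truncated Poisson-kernel as a bounded continuous function -/
noncomputable def gk (k : ℕ) : BoundedContinuousFunction ℝ ℝ :=
  BoundedContinuousFunction.ofNormedAddCommGroup
    (fun x => Real.exp (-(max x 0)) * (max x 0) ^ k / (Nat.factorial k))
    (by continuity) 1
    (fun x => by
      rw [Real.norm_eq_abs, abs_of_nonneg (poisson_term_nonneg (le_max_right x 0) k)]
      exact poisson_term_le_one (le_max_right x 0) k)

lemma gk_apply (k : ℕ) (x : ℝ) :
    gk k x = Real.exp (-(max x 0)) * (max x 0) ^ k / (Nat.factorial k) := rfl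

lemma gk_apply_nonneg (k : ℕ) {x : ℝ} (hx : 0 ≤ x) :
    gk k x = Real.exp (-x) * x ^ k / (Nat.factorial k) := by
  rw [gk_apply, max_eq_left hx]

lemma gk_abs_le_one (k : ℕ) (x : ℝ) : |gk k x| ≤ 1 := by
  rw [gk_apply, abs_of_nonneg (poisson_term_nonneg (le_max_right x 0) k)]
  exact poisson_term_le_one (le_max_right x 0) k

lemma thin_tendsto {Ω : Type*} [MeasurableSpace Ω] (P : Measure Ω) [IsProbabilityMeasure P]
    (X : ℕ → Ω → ℕ) (hXmeas : ∀ n, Measurable (X n))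
    (γ : ℕ → ℝ) (hγ : ∀ n, γ n ∈ Set.Icc (0:ℝ) 1)
    (hγ0 : Filter.Tendsto γ Filter.atTop (nhds 0))
    (μX : Measure ℝ) [IsProbabilityMeasure μX] (hμX : μX (Set.Iio 0) = 0)
    (hconv : ∀ f : BoundedContinuousFunction ℝ ℝ,
      Filter.Tendsto (fun n => ∫ ω, f (γ n * (X n ω : ℝ)) ∂P)
        Filter.atTop (nhds (∫ x, f x ∂μX)))
    (k : ℕ) :
    Tendsto (fun n => thinPMF P (X n) (γ n) k) atTop (𝓝 (mixedPoissonPMF μX k)) := by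
  have hI := hconv (gk k)
  have hlim : ∫ x, gk k x ∂μX = mixedPoissonPMF μX k := by
    unfold mixedPoissonPMF
    apply integral_congr_ae
    filter_upwards [ae_nonneg_of_Iio hμX] with x hx
    exact gk_apply_nonneg k hx
  rw [hlim] at hI
  have hgkval : ∀ n ω, gk k (γ n * (X n ω : ℝ))
      = Real.exp (-(γ n * (X n ω : ℝ))) * (γ n * (X n ω : ℝ)) ^ k / (Nat.factorial k) := by
    intro n ω
    exact gk_apply_nonneg k (mul_nonneg (hγ n).1 (Nat.cast_nonneg _))
  have hgint : ∀ n, Integrable (fun ω => gk k (γ n * (X n ω : ℝ))) P := by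
    intro n
    have hm : Measurable fun ω => γ n * (X n ω : ℝ) :=
      measurable_const.mul ((measurable_from_top (f := (Nat.cast : ℕ → ℝ))).comp (hXmeas n))
    apply Integrable.mono' (integrable_const (1:ℝ))
      ((gk k).continuous.measurable.comp hm).aestronglyMeasurable
    filter_upwards with ω
    rw [Real.norm_eq_abs]
    exact gk_abs_le_one k _
  have hdiff : ∀ n, |thinPMF P (X n) (γ n) k - ∫ ω, gk k (γ n * (X n ω : ℝ)) ∂P|
      ≤ Cst k * γ n := by
    intro n
    have hb := thin_integrand_integrable P (hXmeas n) (hγ n).1 (hγ n).2 k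
    have hg := hgint n
    unfold thinPMF
    rw [← integral_sub hb hg]
    calc |∫ ω, (((X n ω).choose k : ℝ) * γ n ^ k * (1 - γ n) ^ (X n ω - k)
            - gk k (γ n * (X n ω : ℝ))) ∂P|
        ≤ ∫ ω, |((X n ω).choose k : ℝ) * γ n ^ k * (1 - γ n) ^ (X n ω - k)
            - gk k (γ n * (X n ω : ℝ))| ∂P := by
          simpa [Real.norm_eq_abs] using
            norm_integral_le_integral_norm (μ := P)
              (fun ω => ((X n ω).choose k : ℝ) * γ n ^ k * (1 - γ n) ^ (X n ω - k)
                - gk k (γ n * (X n ω : ℝ)))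
      _ ≤ ∫ _, Cst k * γ n ∂P := by
          apply integral_mono (hb.sub hg).abs (integrable_const _)
          intro ω
          simp only [Pi.sub_apply]
          rw [hgkval n ω]
          exact key k (X n ω) (hγ n).1 (hγ n).2
      _ = Cst k * γ n := by simp
  have hbound : ∀ n, ‖thinPMF P (X n) (γ n) k - ∫ ω, gk k (γ n * (X n ω : ℝ)) ∂P‖
      ≤ Cst k * γ n := by
    intro n
    rw [Real.norm_eq_abs]
    exact hdiff n
  have h0' : Tendsto (fun n => thinPMF P (X n) (γ n) k
      - ∫ ω, gk k (γ n * (X n ω : ℝ)) ∂P) atTop (𝓝 0) :=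
    squeeze_zero_norm hbound (by simpa using hγ0.const_mul (Cst k))
  have hfin := h0'.add hI
  rw [zero_add] at hfin
  convert hfin using 2 with n
  ring

theorem stmt13 {Ω : Type*} [MeasurableSpace Ω] (P : Measure Ω) [IsProbabilityMeasure P]
    (X : ℕ → Ω → ℕ) (hXmeas : ∀ n, Measurable (X n))
    (γ : ℕ → ℝ) (hγ : ∀ n, γ n ∈ Set.Icc (0:ℝ) 1)
    (hγ0 : Filter.Tendsto γ Filter.atTop (nhds 0))
    -- the law of the limit X (a nonnegative random variable)
    (μX : Measure ℝ) [IsProbabilityMeasure μX] (hμX : μX (Set.Iio 0) = 0)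
    -- γ_n X_n → X in distribution
    (hconv : ∀ f : BoundedContinuousFunction ℝ ℝ,
      Filter.Tendsto (fun n => ∫ ω, f (γ n * (X n ω : ℝ)) ∂P)
        Filter.atTop (nhds (∫ x, f x ∂μX))) :
    -- conclusion: γ_n ∘ X_n → N_X in distribution
    ∀ f : BoundedContinuousFunction ℕ ℝ,
      Filter.Tendsto (fun n => ∑' k : ℕ, f k * thinPMF P (X n) (γ n) k)
        Filter.atTop (nhds (∑' k : ℕ, f k * mixedPoissonPMF μX k)) := by
  intro f
  set p : ℕ → ℝ := mixedPoissonPMF μX with hpdef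
  set pn : ℕ → ℕ → ℝ := fun n k => thinPMF P (X n) (γ n) k with hpndef
  have hp0 : ∀ k, 0 ≤ p k := fun k => mixedPoissonPMF_nonneg hμX k
  have hpsum : HasSum p 1 := mixedPoissonPMF_hasSum_one hμX
  have hpsummable : Summable p := hpsum.summable
  have hptsum : ∑' k, p k = 1 := hpsum.tsum_eq
  have hpn0 : ∀ n k, 0 ≤ pn n k := fun n k => thinPMF_nonneg P (hγ n).1 (hγ n).2 k
  have hpnsummable : ∀ n, Summable (pn n) := fun n =>
    summable_of_sum_le (fun k => hpn0 n k)
      (fun F => thinPMF_sum_le_one P (hXmeas n) (hγ n).1 (hγ n).2 F)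
  have hpntsum : ∀ n, ∑' k, pn n k ≤ 1 := fun n =>
    Summable.tsum_le_of_sum_le (hpnsummable n)
      (fun F => thinPMF_sum_le_one P (hXmeas n) (hγ n).1 (hγ n).2 F)
  have hpt : ∀ k, Tendsto (fun n => pn n k) atTop (𝓝 (p k)) := fun k =>
    thin_tendsto P X hXmeas γ hγ hγ0 μX hμX hconv k
  set q : ℕ → ℕ → ℝ := fun n k => max (p k - pn n k) 0 with hqdef
  set r : ℕ → ℕ → ℝ := fun n k => max (pn n k - p k) 0 with hrdef
  have hq0 : ∀ n k, 0 ≤ q n k := fun n k => le_max_right _ _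
  have hr0 : ∀ n k, 0 ≤ r n k := fun n k => le_max_right _ _
  have hqlep : ∀ n k, q n k ≤ p k := fun n k =>
    max_le (by linarith [hpn0 n k]) (hp0 k)
  have hrlepn : ∀ n k, r n k ≤ pn n k := fun n k =>
    max_le (by linarith [hp0 k]) (hpn0 n k)
  have hqsummable : ∀ n, Summable (q n) := fun n =>
    Summable.of_nonneg_of_le (hq0 n) (hqlep n) hpsummable
  have hrsummable : ∀ n, Summable (r n) := fun n =>
    Summable.of_nonneg_of_le (hr0 n) (hrlepn n) (hpnsummable n)
  have hqt : ∀ k, Tendsto (fun n => q n k) atTop (𝓝 0) := by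
    intro k
    have h1 : Tendsto (fun n => p k - pn n k) atTop (𝓝 (p k - p k)) :=
      tendsto_const_nhds.sub (hpt k)
    rw [sub_self] at h1
    have h2 := h1.max (tendsto_const_nhds (x := (0:ℝ)))
    rw [max_self] at h2
    exact h2
  have hqsum0 : Tendsto (fun n => ∑' k, q n k) atTop (𝓝 0) := by
    have hb : ∀ᶠ n in atTop, ∀ k, ‖q n k‖ ≤ p k := by
      filter_upwards with n k
      rw [Real.norm_eq_abs, abs_of_nonneg (hq0 n k)]
      exact hqlep n k
    have := tendsto_tsum_of_dominated_convergence (f := q) (g := fun _ => (0:ℝ))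
      hpsummable hqt hb
    simpa using this
  -- tsum of r is at most tsum of q
  have hrq : ∀ n, ∑' k, r n k ≤ ∑' k, q n k := by
    intro n
    have hdiff : ∀ k, r n k - q n k = pn n k - p k := by
      intro k
      rcases le_total (pn n k) (p k) with h | h
      · rw [hrdef, hqdef]
        simp only
        rw [max_eq_right (by linarith), max_eq_left (by linarith)]
        ring
      · rw [hrdef, hqdef]
        simp only
        rw [max_eq_left (by linarith), max_eq_right (by linarith)]
        ring
    have h1 : ∑' k, (r n k - q n k) = ∑' k, r n k - ∑' k, q n k :=
      Summable.tsum_sub (hrsummable n) (hqsummable n)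
    have h2 : ∑' k, (r n k - q n k) = ∑' k, (pn n k - p k) := by
      apply tsum_congr
      exact hdiff
    have h3 : ∑' k, (pn n k - p k) = ∑' k, pn n k - ∑' k, p k :=
      Summable.tsum_sub (hpnsummable n) hpsummable
    have h4 : ∑' k, pn n k - ∑' k, p k ≤ 0 := by
      rw [hptsum]
      linarith [hpntsum n]
    linarith
  -- final norm bound
  have hfb : ∀ n, ‖(∑' k, f k * pn n k) - ∑' k, f k * p k‖ ≤ 2 * ‖f‖ * ∑' k, q n k := by
    intro n
    have hfk : ∀ k : ℕ, ‖f k‖ ≤ ‖f‖ := fun k => f.norm_coe_le_norm k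
    have sfp : Summable (fun k => f k * p k) := by
      apply Summable.of_norm_bounded (hpsummable.mul_left _)
      intro k
      rw [norm_mul]
      have : ‖p k‖ = p k := by rw [Real.norm_eq_abs, abs_of_nonneg (hp0 k)]
      rw [this]
      exact mul_le_mul_of_nonneg_right (hfk k) (hp0 k)
    have sfpn : Summable (fun k => f k * pn n k) := by
      apply Summable.of_norm_bounded ((hpnsummable n).mul_left _)
      intro k
      rw [norm_mul]
      have : ‖pn n k‖ = pn n k := by rw [Real.norm_eq_abs, abs_of_nonneg (hpn0 n k)]
      rw [this]
      exact mul_le_mul_of_nonneg_right (hfk k) (hpn0 n k)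
    have hptwise : ∀ k, ‖f k * pn n k - f k * p k‖ ≤ ‖f‖ * (q n k + r n k) := by
      intro k
      have e1 : f k * pn n k - f k * p k = f k * (pn n k - p k) := by ring
      rw [e1, norm_mul]
      have e2 : ‖pn n k - p k‖ = q n k + r n k := by
        rcases le_total (pn n k) (p k) with h | h
        · rw [Real.norm_eq_abs, abs_of_nonpos (by linarith), hqdef, hrdef]
          simp only
          rw [max_eq_left (by linarith), max_eq_right (by linarith)]
          ring
        · rw [Real.norm_eq_abs, abs_of_nonneg (by linarith), hqdef, hrdef]
          simp only
          rw [max_eq_right (by linarith), max_eq_left (by linarith)]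
          ring
      rw [e2]
      apply mul_le_mul_of_nonneg_right (hfk k)
      have := hq0 n k
      have := hr0 n k
      linarith
    have hsumqr : Summable (fun k => q n k + r n k) := (hqsummable n).add (hrsummable n)
    have hnormsummable : Summable (fun k => ‖f k * pn n k - f k * p k‖) := by
      apply Summable.of_nonneg_of_le (fun k => norm_nonneg _) hptwise
      exact hsumqr.mul_left _
    calc ‖(∑' k, f k * pn n k) - ∑' k, f k * p k‖
        = ‖∑' k, (f k * pn n k - f k * p k)‖ := by rw [Summable.tsum_sub sfpn sfp]
      _ ≤ ∑' k, ‖f k * pn n k - f k * p k‖ := norm_tsum_le_tsum_norm hnormsummable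
      _ ≤ ∑' k, ‖f‖ * (q n k + r n k) := Summable.tsum_le_tsum hptwise hnormsummable (hsumqr.mul_left _)
      _ = ‖f‖ * (∑' k, q n k + ∑' k, r n k) := by
          rw [← Summable.tsum_add (hqsummable n) (hrsummable n), tsum_mul_left]
      _ ≤ ‖f‖ * (∑' k, q n k + ∑' k, q n k) := by
          apply mul_le_mul_of_nonneg_left _ (norm_nonneg f)
          linarith [hrq n]
      _ = 2 * ‖f‖ * ∑' k, q n k := by ring
  have hzero : Tendsto (fun n => (∑' k, f k * pn n k) - ∑' k, f k * p k) atTop (𝓝 0) :=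
    squeeze_zero_norm hfb (by simpa using hqsum0.const_mul (2 * ‖f‖))
  have hfinal := hzero.add (tendsto_const_nhds (x := ∑' k, f k * p k))
  rw [zero_add] at hfinal
  convert hfinal using 2 with n
  ring
end
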